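/- arXiv:1611.04113 — 10 statements merged into one kernel-verified Lean document; each statement's English description precedes it below -/
import Mathlib

section
/- For every t ≥ 0 and every ξ ∈ ℝ, |exp(−t ξ² / (1 + iξ)) − 1| ≤ t |ξ|. -/
open Complex

lemma aux_abs_exp_sub_one_le {z : ℂ} (hz : z.re ≤ 0) :
    ‖Complex.exp z - 1‖ ≤ ‖z‖ := by
  have hderiv : ∀ s ∈ Set.uIcc (0:ℝ) 1,
      HasDerivAt (fun s : ℝ => Complex.exp ((s : ℂ) * z)) (Complex.exp ((s:ℂ)*z) * z) s := by
    intro s _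
    have h1 : HasDerivAt (fun s : ℝ => (s : ℂ) * z) z s := by
      simpa using (Complex.ofRealCLM.hasDerivAt (x := s)).mul_const z
    exact (Complex.hasDerivAt_exp ((s:ℂ)*z)).comp s h1
  have hint : IntervalIntegrable (fun s : ℝ => Complex.exp ((s:ℂ)*z) * z)
      MeasureTheory.volume 0 1 := by
    apply Continuous.intervalIntegrable
    exact (Complex.continuous_exp.comp ((continuous_ofReal).mul continuous_const)).mul
      continuous_const
  have heq := intervalIntegral.integral_eq_sub_of_hasDerivAt hderiv hint
  simp only [ofReal_one, one_mul, ofReal_zero, zero_mul, Complex.exp_zero] at heq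
  rw [← heq]
  have hbound : ∀ s ∈ Set.uIoc (0:ℝ) 1, ‖Complex.exp ((s:ℂ)*z) * z‖ ≤ ‖z‖ := by
    intro s hs
    rw [Set.uIoc_of_le zero_le_one] at hs
    rw [norm_mul, Complex.norm_exp]
    have : ((s:ℂ)*z).re = s * z.re := by simp
    rw [this]
    have : s * z.re ≤ 0 := mul_nonpos_of_nonneg_of_nonpos (le_of_lt hs.1) hz
    calc Real.exp (s * z.re) * ‖z‖ ≤ 1 * ‖z‖ := by
          apply mul_le_mul_of_nonneg_right _ (norm_nonneg z)
          exact Real.exp_le_one_iff.mpr this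
      _ = ‖z‖ := by simp
  have := intervalIntegral.norm_integral_le_of_norm_le_const hbound
  simpa using this

/-- Pointwise frequency-side form of the local error estimate for the flow `X^t` of
`v_t = K*v - v + v_x`: for `t ≥ 0` and `ξ ∈ ℝ`, `|exp(-tξ²/(1+iξ)) - 1| ≤ t|ξ|`. -/
theorem abs_semigroup_multiplier_sub_one_le (t : ℝ) (ht : 0 ≤ t) (ξ : ℝ) :
    ‖Complex.exp (-(t * ξ ^ 2 : ℂ) / (1 + Complex.I * ξ)) - 1‖ ≤ t * |ξ| := by
  set z : ℂ := -(t * ξ ^ 2 : ℂ) / (1 + Complex.I * ξ) with hzdef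
  have hre : z.re ≤ 0 := by
    have : z.re = -(t * ξ ^ 2) / (1 + ξ^2) := by
      simp [hzdef, Complex.div_re, Complex.normSq_apply, ← Complex.ofReal_pow]
      ring
    rw [this]
    apply div_nonpos_of_nonpos_of_nonneg
    · simp; positivity
    · positivity
  have habs : ‖z‖ ≤ t * |ξ| := by
    rw [hzdef, norm_div]
    have hden : ‖1 + Complex.I * ξ‖ = Real.sqrt (1 + ξ^2) := by
      rw [Complex.norm_def, Complex.normSq_apply]
      simp
      ring_nf
    have hnum : ‖-(t * ξ ^ 2 : ℂ)‖ = t * ξ^2 := by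
      rw [norm_neg]
      have : ((t * ξ ^ 2 : ℝ) : ℂ) = (t * ξ ^ 2 : ℂ) := by push_cast; ring
      rw [← this, Complex.norm_real, Real.norm_eq_abs]
      exact _root_.abs_of_nonneg (by positivity)
    rw [hnum, hden]
    rcases eq_or_ne ξ 0 with h0 | h0
    · simp [h0]
    · have hsq : |ξ| ≤ Real.sqrt (1 + ξ^2) := by
        rw [← Real.sqrt_sq_eq_abs]
        exact Real.sqrt_le_sqrt (by nlinarith)
      have hpos : (0:ℝ) < |ξ| := abs_pos.mpr h0
      rw [div_le_iff₀ (lt_of_lt_of_le hpos hsq)]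
      calc t * ξ^2 = (t * |ξ|) * |ξ| := by rw [← _root_.sq_abs]; ring
        _ ≤ (t * |ξ|) * Real.sqrt (1 + ξ^2) := by
            apply mul_le_mul_of_nonneg_left hsq (by positivity)
  exact le_trans (aux_abs_exp_sub_one_le hre) habs
end

section
/- Let K(z) = e^{-z} for z > 0 and K(z) = 0 for z ≤ 0. Let v : ℝ → ℝ be differentiable at every point, with v ∈ L²(ℝ) and derivative v' ∈ L²(ℝ). Then the function x ↦ (K*v)(x) − v(x) + v'(x) belongs to L²(ℝ) and ‖K*v − v + v'‖_{L²(ℝ)} ≤ ‖v'‖_{L²(ℝ)}. -/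
open MeasureTheory Real Filter Set
open scoped ENNReal

namespace NonlocalAux

/-- Product of two `L²` functions is integrable. -/
lemma mulL1 {f g : ℝ → ℝ} {μ : Measure ℝ} (hf : MemLp f 2 μ) (hg : MemLp g 2 μ) :
    Integrable (fun x => f x * g x) μ := by
  rw [← memLp_one_iff_integrable]
  have := hg.smul (𝕜 := ℝ) hf (r := 1)
  exact this

/-- An integrable function on `ℝ` having a limit at `+∞` has limit zero. -/
lemma limit_zero_atTop {f : ℝ → ℝ} {c : ℝ} (hf : Integrable f volume)
    (h : Tendsto f atTop (nhds c)) : c = 0 := by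
  by_contra hc
  have hev : ∀ᶠ x in atTop, |c| / 2 ≤ ‖f x‖ := by
    have hn : Tendsto (fun x => ‖f x‖) atTop (nhds ‖c‖) := h.norm
    have : |c|/2 < ‖c‖ := by rw [Real.norm_eq_abs]; have := abs_pos.2 hc; linarith
    exact hn.eventually (eventually_ge_nhds this)
  obtain ⟨A, hA⟩ := hev.exists_forall_of_atTop
  have hconst : Integrable (fun _ : ℝ => |c|/2) (volume.restrict (Ici A)) := by
    refine Integrable.mono (hf.integrableOn) aestronglyMeasurable_const ?_
    filter_upwards [ae_restrict_mem measurableSet_Ici] with x hx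
    rw [Real.norm_eq_abs (|c|/2), abs_of_nonneg (by positivity)]
    exact hA x hx
  rw [integrable_const_iff] at hconst
  rcases hconst with h0 | hfin
  · exact hc (by have := abs_pos.2 hc; simp at h0; linarith [h0])
  · have := hfin.measure_univ_lt_top; simp [Measure.restrict_apply, MeasurableSet.univ] at this

/-- An integrable function on `ℝ` having a limit at `-∞` has limit zero. -/
lemma limit_zero_atBot {f : ℝ → ℝ} {c : ℝ} (hf : Integrable f volume)
    (h : Tendsto f atBot (nhds c)) : c = 0 := by
  have : Tendsto (fun x => f (-x)) atTop (nhds c) := h.comp tendsto_neg_atTop_atBot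
  refine limit_zero_atTop ?_ this
  have hmp : MeasurePreserving (fun x : ℝ => -x) volume volume := Measure.measurePreserving_neg _
  exact (hmp.integrable_comp_emb (MeasurableEquiv.neg ℝ).measurableEmbedding).2 hf

/-- If `f` and `f'` are both integrable on `ℝ` and `f' = deriv f` everywhere,
then `∫ f' = 0`. -/
lemma integral_deriv_eq_zero {f f' : ℝ → ℝ} (hd : ∀ x, HasDerivAt f (f' x) x)
    (hf : Integrable f volume) (hf' : Integrable f' volume) : ∫ x, f' x = 0 := by
  have hrepr : ∀ x : ℝ, f x = f 0 + ∫ t in (0:ℝ)..x, f' t := by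
    intro x
    have := intervalIntegral.integral_eq_sub_of_hasDerivAt
      (f := f) (f' := f') (a := 0) (b := x) (fun t _ => hd t)
      (hf'.intervalIntegrable (a := 0) (b := x))
    linarith [this]
  have htop : Tendsto f atTop (nhds (f 0 + ∫ t in Ioi (0:ℝ), f' t)) := by
    have h1 := MeasureTheory.intervalIntegral_tendsto_integral_Ioi 0 hf'.integrableOn tendsto_id
    exact ((h1.const_add (f 0)).congr (fun x => (hrepr x).symm))
  have hbot : Tendsto f atBot (nhds (f 0 - ∫ t in Iic (0:ℝ), f' t)) := by
    have h1 := MeasureTheory.intervalIntegral_tendsto_integral_Iic 0 hf'.integrableOn tendsto_id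
    have h2 := (h1.neg).const_add (f 0)
    refine h2.congr (fun x => ?_)
    rw [← intervalIntegral.integral_symm]
    simpa using (hrepr x).symm
  have e1 : f 0 + ∫ t in Ioi (0:ℝ), f' t = 0 := limit_zero_atTop hf htop
  have e2 : f 0 - ∫ t in Iic (0:ℝ), f' t = 0 := limit_zero_atBot hf hbot
  have := intervalIntegral.integral_Iic_add_Ioi (b := (0:ℝ)) hf'.integrableOn hf'.integrableOn
  rw [← this]
  linarith

/-- `L²` bound for convolution with a nonnegative kernel of mass one. -/
lemma memL2_conv {K v w : ℝ → ℝ} (hK_meas : Measurable K) (hK_nonneg : ∀ y, 0 ≤ K y)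
    (hKl : ∫⁻ y, ENNReal.ofReal (K y) = 1) (hv_meas : Measurable v)
    (hv2 : MemLp v 2 (volume : Measure ℝ)) (hw_meas : AEStronglyMeasurable w volume)
    (hw : ∀ x, w x = ∫ y, K y * v (x - y)) : MemLp w 2 (volume : Measure ℝ) := by
  set φ : ℝ → ℝ≥0∞ := fun y => ENNReal.ofReal (K y) with hφ
  have hφ_meas : Measurable φ := ENNReal.measurable_ofReal.comp hK_meas
  set ψ : ℝ → ℝ≥0∞ := fun z => (‖v z‖₊ : ℝ≥0∞) ^ (2:ℝ) with hψ
  have hψ_meas : Measurable ψ := (hv_meas.nnnorm.coe_nnreal_ennreal).pow_const _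
  set M : ℝ≥0∞ := ∫⁻ z, ψ z with hM
  have hM_lt : M < ∞ := by
    have h2 := lintegral_rpow_enorm_lt_top_of_eLpNorm_lt_top (f := v) (p := 2)
      (by norm_num) (by norm_num) hv2.eLpNorm_lt_top
    have ht : (2:ℝ≥0∞).toReal = (2:ℝ) := by norm_num
    rw [ht] at h2
    exact h2
  have key : ∀ x : ℝ, (‖w x‖₊ : ℝ≥0∞) ^ (2:ℝ) ≤ ∫⁻ y, φ y * ψ (x - y) := by
    intro x
    have h1 : (‖w x‖₊ : ℝ≥0∞) ≤ ∫⁻ y, (‖K y * v (x - y)‖₊ : ℝ≥0∞) := by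
      rw [hw x]; exact enorm_integral_le_lintegral_enorm _
    have h2 : ∀ y : ℝ, (‖K y * v (x - y)‖₊ : ℝ≥0∞)
        = (φ y ^ (1/2:ℝ)) * (φ y ^ (1/2:ℝ) * (‖v (x - y)‖₊ : ℝ≥0∞)) := by
      intro y
      rw [← mul_assoc, ← ENNReal.rpow_add_of_nonneg _ _ (by norm_num) (by norm_num)]
      norm_num
      congr 1
      simp [hφ]; exact Real.enorm_eq_ofReal (hK_nonneg y)
    have hgmeas : Measurable fun y : ℝ => φ y ^ (1/2:ℝ) * (‖v (x - y)‖₊ : ℝ≥0∞) :=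
      (hφ_meas.pow_const _).mul
        ((hv_meas.comp (measurable_const.sub measurable_id)).nnnorm.coe_nnreal_ennreal)
    have hhold := ENNReal.lintegral_mul_le_Lp_mul_Lq (volume : Measure ℝ)
      (f := fun y => φ y ^ (1/2:ℝ))
      (g := fun y => φ y ^ (1/2:ℝ) * (‖v (x - y)‖₊ : ℝ≥0∞))
      Real.HolderConjugate.two_two
      ((hφ_meas.pow_const _).aemeasurable) hgmeas.aemeasurable
    have hf2 : ∫⁻ y, (φ y ^ (1/2:ℝ)) ^ (2:ℝ) = 1 := by
      simp_rw [← ENNReal.rpow_mul]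
      norm_num
      exact hKl
    have hg2 : ∫⁻ y, (φ y ^ (1/2:ℝ) * (‖v (x - y)‖₊ : ℝ≥0∞)) ^ (2:ℝ)
        = ∫⁻ y, φ y * ψ (x - y) := by
      congr 1
      funext y
      rw [ENNReal.mul_rpow_of_nonneg _ _ (by norm_num : (0:ℝ) ≤ 2), ← ENNReal.rpow_mul,
        show ((1:ℝ)/2*2 : ℝ) = 1 by norm_num, ENNReal.rpow_one]
    rw [hf2, hg2] at hhold
    simp only [ENNReal.one_rpow, one_mul] at hhold
    have h3 : (‖w x‖₊ : ℝ≥0∞) ≤ (∫⁻ y, φ y * ψ (x - y)) ^ (1/2:ℝ) := by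
      refine h1.trans ?_
      calc ∫⁻ y, (‖K y * v (x - y)‖₊ : ℝ≥0∞)
          = ∫⁻ y, (φ y ^ (1/2:ℝ)) * (φ y ^ (1/2:ℝ) * (‖v (x - y)‖₊ : ℝ≥0∞)) := by
            congr 1; funext y; exact h2 y
        _ ≤ (∫⁻ y, φ y * ψ (x - y)) ^ (1/2:ℝ) := hhold
    calc (‖w x‖₊ : ℝ≥0∞) ^ (2:ℝ)
        ≤ ((∫⁻ y, φ y * ψ (x - y)) ^ (1/2:ℝ)) ^ (2:ℝ) :=
          ENNReal.rpow_le_rpow h3 (by norm_num)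
      _ = ∫⁻ y, φ y * ψ (x - y) := by rw [← ENNReal.rpow_mul]; norm_num
  have main : ∫⁻ x, (‖w x‖₊ : ℝ≥0∞) ^ (2:ℝ) ≤ M := by
    calc ∫⁻ x, (‖w x‖₊ : ℝ≥0∞) ^ (2:ℝ)
        ≤ ∫⁻ x, ∫⁻ y, φ y * ψ (x - y) := lintegral_mono key
      _ = ∫⁻ y, ∫⁻ x, φ y * ψ (x - y) := by
          refine lintegral_lintegral_swap ?_
          exact ((hφ_meas.comp measurable_snd).mul
            (hψ_meas.comp (measurable_fst.sub measurable_snd))).aemeasurable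
      _ = ∫⁻ y, φ y * M := by
          congr 1; funext y
          rw [lintegral_const_mul _ (f := fun x => ψ (x - y)) (hψ_meas.comp (measurable_id.sub measurable_const)),
            lintegral_sub_right_eq_self ψ y]
      _ = 1 * M := by rw [lintegral_mul_const _ hφ_meas, hKl]
      _ = M := one_mul M
  refine ⟨hw_meas, ?_⟩
  rw [eLpNorm_lt_top_iff_lintegral_rpow_enorm_lt_top (by norm_num) (by norm_num)]
  have ht : (2:ℝ≥0∞).toReal = (2:ℝ) := by norm_num
  rw [ht]
  exact lt_of_le_of_lt main hM_lt

section Structure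

variable {K v : ℝ → ℝ}

/-- Integrability of `exp * v` on half-lines, for `v ∈ L²`. -/
lemma exp_mul_v_int (hv2 : MemLp v 2 (volume : Measure ℝ)) (a : ℝ) :
    IntegrableOn (fun t => Real.exp t * v t) (Iic a) volume := by
  have hexp2 : MemLp Real.exp 2 (volume.restrict (Iic a)) := by
    rw [memLp_two_iff_integrable_sq (Real.continuous_exp.aestronglyMeasurable)]
    refine Integrable.mono' (g := fun t => Real.exp a * Real.exp t)
      ((integrableOn_exp_Iic a).const_mul _) ?_ ?_
    · exact ((Real.continuous_exp.pow 2).aestronglyMeasurable)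
    · filter_upwards [ae_restrict_mem measurableSet_Iic] with t ht
      rw [Real.norm_eq_abs, abs_of_nonneg (by positivity), pow_two]
      exact mul_le_mul_of_nonneg_right (Real.exp_le_exp.2 ht) (Real.exp_nonneg t)
  exact mulL1 hexp2 (MemLp.restrict _ hv2)

/-- Representation of the convolution with the exponential kernel. -/
lemma w_eq (hK : ∀ z : ℝ, K z = if 0 < z then Real.exp (-z) else 0) (x : ℝ) :
    (∫ y, K y * v (x - y)) = Real.exp (-x) * ∫ t in Iic x, Real.exp t * v t := by
  have h1 : (∫ y, K y * v (x - y)) = ∫ t, K (x - t) * v t := by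
    rw [← integral_sub_left_eq_self (fun y => K y * v (x - y)) volume x]
    congr 1; funext t; simp
  rw [h1]
  have h2 : (fun t => K (x - t) * v t)
      = (Iio x).indicator (fun t => Real.exp (-x) * (Real.exp t * v t)) := by
    funext t
    rw [hK (x - t)]
    by_cases ht : t < x
    · rw [indicator_of_mem (by exact ht)]
      rw [if_pos (by linarith)]
      rw [show -(x - t) = -x + t by ring, Real.exp_add, mul_assoc]
    · rw [indicator_of_notMem (by exact ht)]
      rw [if_neg (by intro h; exact ht (by linarith))]
      ring
  rw [h2, integral_indicator measurableSet_Iio, integral_const_mul,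
    ← integral_Iic_eq_integral_Iio]

variable (hv : Differentiable ℝ v) (hv2 : MemLp v 2 (volume : Measure ℝ))

include hv hv2 in
lemma F_hasDeriv (a : ℝ) :
    HasDerivAt (fun u => ∫ t in Iic u, Real.exp t * v t) (Real.exp a * v a) a := by
  set g : ℝ → ℝ := fun t => Real.exp t * v t with hg
  have hgc : Continuous g := Real.continuous_exp.mul hv.continuous
  have hint : ∀ u : ℝ, IntegrableOn g (Iic u) volume := exp_mul_v_int hv2
  have hrepr : ∀ u : ℝ, (∫ t in Iic u, g t) = (∫ t in Iic (0:ℝ), g t) + ∫ t in (0:ℝ)..u, g t := by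
    intro u
    have := intervalIntegral.integral_Iic_sub_Iic (hint 0) (hint u)
    linarith
  have hd : HasDerivAt (fun u => (∫ t in Iic (0:ℝ), g t) + ∫ t in (0:ℝ)..u, g t) (g a) a := by
    refine HasDerivAt.const_add _ ?_
    refine intervalIntegral.integral_hasDerivAt_right (hgc.intervalIntegrable 0 a)
      ?_ hgc.continuousAt
    exact hgc.stronglyMeasurableAtFilter _ _
  exact hd.congr_of_eventuallyEq (Filter.Eventually.of_forall hrepr)

include hv hv2 in
lemma w_hasDeriv (hK : ∀ z : ℝ, K z = if 0 < z then Real.exp (-z) else 0) (x : ℝ) :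
    HasDerivAt (fun x => ∫ y, K y * v (x - y))
      (v x - ∫ y, K y * v (x - y)) x := by
  have heq : (fun x => ∫ y, K y * v (x - y))
      = fun x => Real.exp (-x) * ∫ t in Iic x, Real.exp t * v t := by
    funext u; exact w_eq hK u
  rw [heq]
  have h1 : HasDerivAt (fun x : ℝ => Real.exp (-x)) (-Real.exp (-x)) x := by
    simpa [Function.comp_def] using ((Real.hasDerivAt_exp (-x)).comp x ((hasDerivAt_id x).neg))
  have h2 : HasDerivAt (fun x => Real.exp (-x) * ∫ t in Iic x, Real.exp t * v t) _ x :=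
    (h1.mul (F_hasDeriv hv hv2 x))
  refine h2.congr_deriv ?_
  have hx : Real.exp (-x) * (Real.exp x * v x) = v x := by
    rw [← mul_assoc, ← Real.exp_add]; simp
  rw [w_eq hK x, hx]
  ring

end Structure

end NonlocalAux

open NonlocalAux

/-- For the kernel `K(z) = e^{-z} 1_{z>0}` and `v` differentiable with `v, v' ∈ L²(ℝ)`,
the function `K*v - v + v'` belongs to `L²(ℝ)` and its `L²` norm is bounded by that
of `v'`. -/
theorem memL2_and_norm_le_of_nonlocal_operator
    (K : ℝ → ℝ) (hK : ∀ z : ℝ, K z = if 0 < z then Real.exp (-z) else 0)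
    (v : ℝ → ℝ) (hv : Differentiable ℝ v)
    (hv2 : MemLp v 2 (volume : Measure ℝ))
    (hv'2 : MemLp (deriv v) 2 (volume : Measure ℝ)) :
    MemLp (fun x : ℝ => (∫ y : ℝ, K y * v (x - y)) - v x + deriv v x) 2
        (volume : Measure ℝ) ∧
      eLpNorm (fun x : ℝ => (∫ y : ℝ, K y * v (x - y)) - v x + deriv v x) 2
          (volume : Measure ℝ)
        ≤ eLpNorm (deriv v) 2 (volume : Measure ℝ) := by
  classical
  set w : ℝ → ℝ := fun x => ∫ y : ℝ, K y * v (x - y) with hw_def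
  -- kernel facts
  have hK_nonneg : ∀ y, 0 ≤ K y := by
    intro y; rw [hK y]; split <;> positivity
  have hK_meas : Measurable K := by
    have : K = fun z => if 0 < z then Real.exp (-z) else 0 := funext hK
    rw [this]
    exact Measurable.ite measurableSet_Ioi
      (Real.continuous_exp.measurable.comp measurable_neg) measurable_const
  have hK_ind : K = (Ioi (0:ℝ)).indicator (fun z => Real.exp (-z)) := by
    funext z; rw [hK z]
    by_cases hz : 0 < z
    · rw [if_pos hz, indicator_of_mem (show z ∈ Ioi (0:ℝ) from hz)]
    · rw [if_neg hz, indicator_of_notMem (show z ∉ Ioi (0:ℝ) from hz)]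
  have hK_int : Integrable K volume := by
    rw [hK_ind]
    refine (IntegrableOn.integrable_indicator ?_ measurableSet_Ioi)
    have := exp_neg_integrableOn_Ioi (0:ℝ) (b := 1) one_pos
    simpa using this
  have hK_int1 : ∫ y, K y = 1 := by
    rw [hK_ind, integral_indicator measurableSet_Ioi]
    exact integral_exp_neg_Ioi_zero
  have hKl : ∫⁻ y, ENNReal.ofReal (K y) = 1 := by
    rw [← ofReal_integral_eq_lintegral_ofReal hK_int (Filter.Eventually.of_forall hK_nonneg),
      hK_int1, ENNReal.ofReal_one]
  -- derivative of w
  have hw_deriv : ∀ x, HasDerivAt w (v x - w x) x := fun x => w_hasDeriv hv hv2 hK x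
  have hw_cont : Continuous w := by
    rw [continuous_iff_continuousAt]
    exact fun x => (hw_deriv x).continuousAt
  -- w ∈ L²
  have hw2 : MemLp w 2 (volume : Measure ℝ) :=
    memL2_conv hK_meas hK_nonneg hKl hv.continuous.measurable hv2
      hw_cont.aestronglyMeasurable (fun x => rfl)
  -- w' := v - w ∈ L²
  set w' : ℝ → ℝ := fun x => v x - w x with hw'_def
  have hw'2 : MemLp w' 2 (volume : Measure ℝ) := hv2.sub hw2
  -- integral identities
  have hE1 : ∫ x, v x * deriv v x = 0 := by
    refine integral_deriv_eq_zero (f := fun x => v x * v x / 2) ?_ ?_ ?_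
    · intro x
      have : HasDerivAt (fun x => v x * v x / 2) _ x := ((hv x).hasDerivAt.mul (hv x).hasDerivAt).div_const 2
      convert this using 1
      ring
    · exact (mulL1 hv2 hv2).div_const 2
    · exact mulL1 hv2 hv'2
  have hE2 : ∫ x, w x * w' x = 0 := by
    refine integral_deriv_eq_zero (f := fun x => w x * w x / 2) ?_ ?_ ?_
    · intro x
      have : HasDerivAt (fun x => w x * w x / 2) _ x := ((hw_deriv x).mul (hw_deriv x)).div_const 2
      convert this using 1
      try simp only [hw'_def]
      try ring
    · exact (mulL1 hw2 hw2).div_const 2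
    · exact mulL1 hw2 hw'2
  have hE3 : ∫ x, (deriv v x * w x + v x * w' x) = 0 := by
    refine integral_deriv_eq_zero (f := fun x => v x * w x) ?_ ?_ ?_
    · intro x
      have : HasDerivAt (fun x => v x * w x) _ x := (hv x).hasDerivAt.mul (hw_deriv x)
      convert this using 1
      try simp only [hw'_def]
      try ring
    · exact mulL1 hv2 hw2
    · exact (mulL1 hv'2 hw2).add (mulL1 hv2 hw'2)
  have hE3' : ∫ x, deriv v x * w x = - ∫ x, v x * w' x := by
    have hsplit := integral_add (mulL1 hv'2 hw2) (mulL1 hv2 hw'2)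
    rw [hsplit] at hE3
    linarith
  -- key: ∫ v' w' = ∫ w' w'
  have hkey : ∫ x, deriv v x * w' x = ∫ x, w' x * w' x := by
    have h1 : ∫ x, deriv v x * w' x = (∫ x, deriv v x * v x) - ∫ x, deriv v x * w x := by
      rw [← integral_sub (mulL1 hv'2 hv2) (mulL1 hv'2 hw2)]
      congr 1; funext x; simp only [hw'_def]; ring
    have h2 : ∫ x, deriv v x * v x = 0 := by
      rw [show (fun x => deriv v x * v x) = fun x => v x * deriv v x from
        funext fun x => mul_comm _ _] at *
      exact hE1
    have h3 : ∫ x, w' x * w' x = (∫ x, v x * w' x) - ∫ x, w x * w' x := by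
      rw [← integral_sub (mulL1 hv2 hw'2) (mulL1 hw2 hw'2)]
      congr 1; funext x; simp only [hw'_def]; ring
    rw [h1, h2, h3, hE2, hE3']
    ring
  -- pass to Lp space
  set V' : Lp ℝ 2 (volume : Measure ℝ) := hv'2.toLp (deriv v) with hV'
  set W' : Lp ℝ 2 (volume : Measure ℝ) := hw'2.toLp w' with hW'
  have hinnerVW : inner (𝕜 := ℝ) V' W' = ∫ x, deriv v x * w' x := by
    rw [MeasureTheory.L2.inner_def]
    refine integral_congr_ae ?_
    filter_upwards [hv'2.coeFn_toLp, hw'2.coeFn_toLp] with x h1 h2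
    rw [h1, h2]
    exact mul_comm _ _
  have hinnerWW : inner (𝕜 := ℝ) W' W' = ∫ x, w' x * w' x := by
    rw [MeasureTheory.L2.inner_def]
    refine integral_congr_ae ?_
    filter_upwards [hw'2.coeFn_toLp] with x h2
    rw [h2]
    rfl
  have hinner_eq : inner (𝕜 := ℝ) V' W' = ‖W'‖ ^ 2 := by
    rw [hinnerVW, hkey, ← hinnerWW, real_inner_self_eq_norm_sq]
  have hnormsq : ‖V' - W'‖ ^ 2 = ‖V'‖ ^ 2 - ‖W'‖ ^ 2 := by
    rw [norm_sub_sq_real, hinner_eq]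
    ring
  have hnorm_le : ‖V' - W'‖ ≤ ‖V'‖ := by
    nlinarith [norm_nonneg (V' - W'), norm_nonneg V', norm_nonneg W', sq_nonneg ‖W'‖]
  -- rewrite the target function
  have hTeq : (fun x : ℝ => (∫ y : ℝ, K y * v (x - y)) - v x + deriv v x)
      = fun x => deriv v x - w' x := by
    funext x
    simp only [hw'_def, hw_def]
    ring
  have hT2 : MemLp (fun x : ℝ => (∫ y : ℝ, K y * v (x - y)) - v x + deriv v x) 2
      (volume : Measure ℝ) := by
    rw [hTeq]; exact hv'2.sub hw'2
  refine ⟨hT2, ?_⟩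
  -- norm comparison through Lp
  have hae : (V' - W' : Lp ℝ 2 (volume : Measure ℝ)) =ᵐ[volume]
      fun x => deriv v x - w' x := by
    filter_upwards [Lp.coeFn_sub V' W', hv'2.coeFn_toLp, hw'2.coeFn_toLp] with x h0 h1 h2
    rw [h0]
    simp only [Pi.sub_apply]
    rw [h1, h2]
  have heq1 : eLpNorm (fun x : ℝ => (∫ y : ℝ, K y * v (x - y)) - v x + deriv v x) 2
      (volume : Measure ℝ) = eLpNorm (V' - W' : Lp ℝ 2 (volume : Measure ℝ)) 2 volume := by
    rw [hTeq]
    exact (eLpNorm_congr_ae hae).symm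
  rw [heq1]
  have hfin1 : eLpNorm (V' - W' : Lp ℝ 2 (volume : Measure ℝ)) 2 volume ≠ ∞ :=
    (MemLp.eLpNorm_lt_top (Lp.memLp (V' - W'))).ne
  have hfin2 : eLpNorm (deriv v) 2 (volume : Measure ℝ) ≠ ∞ := (MemLp.eLpNorm_lt_top hv'2).ne
  rw [← ENNReal.toReal_le_toReal hfin1 hfin2]
  have e1 : (eLpNorm (V' - W' : Lp ℝ 2 (volume : Measure ℝ)) 2 volume).toReal
      = ‖V' - W'‖ := (Lp.norm_def _).symm
  have e2 : (eLpNorm (deriv v) 2 (volume : Measure ℝ)).toReal = ‖V'‖ :=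
    (Lp.norm_toLp _ hv'2).symm
  rw [e1, e2]
  exact hnorm_le
end

section
/- Let J : ℝ → [0,∞) be a measurable, even function with ∫_ℝ J(z) z² dz < ∞, and let φ : ℝ → ℝ be differentiable at every point with derivative φ' ∈ L²(ℝ). Then ∫_ℝ ∫_ℝ J(x−y) (φ(x) − φ(y))² dx dy ≤ (∫_ℝ J(z) z² dz) · ∫_ℝ φ'(x)² dx. -/
open MeasureTheory
open scoped ENNReal

/-- For a nonnegative, measurable, even kernel `J` with finite second moment and a
differentiable `φ` with `φ' ∈ L²(ℝ)`,
`∫∫ J(x-y)(φ(x)-φ(y))² dx dy ≤ (∫ J(z) z² dz) ∫ φ'(x)² dx`. -/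
theorem double_integral_kernel_le_second_moment_mul_deriv_sq
    (J : ℝ → ℝ) (hJmeas : Measurable J) (hJnonneg : ∀ z, 0 ≤ J z)
    (hJeven : ∀ z, J (-z) = J z)
    (hJmom : (∫⁻ z : ℝ, ENNReal.ofReal (J z * z ^ 2)) < ⊤)
    (φ : ℝ → ℝ) (hφ : Differentiable ℝ φ)
    (hφ' : MemLp (deriv φ) 2 (volume : Measure ℝ)) :
    (∫⁻ x : ℝ, ∫⁻ y : ℝ, ENNReal.ofReal (J (x - y) * (φ x - φ y) ^ 2))
      ≤ (∫⁻ z : ℝ, ENNReal.ofReal (J z * z ^ 2))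
          * ∫⁻ x : ℝ, ENNReal.ofReal (deriv φ x ^ 2) := by
  classical
  set f : ℝ → ℝ := deriv φ with hfdef
  have hfm : Measurable f := measurable_deriv φ
  have hφm : Measurable φ := hφ.continuous.measurable
  set I : ℝ≥0∞ := ∫⁻ x : ℝ, ENNReal.ofReal (f x ^ 2) with hIdef
  have hg : Measurable fun t : ℝ => ENNReal.ofReal (f t ^ 2) :=
    (hfm.pow_const 2).ennreal_ofReal
  -- interval integrability of f
  have hint : ∀ a b : ℝ, IntervalIntegrable f volume a b := by
    intro a b
    rw [intervalIntegrable_iff]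
    have h1 : MemLp f 2 (volume.restrict (Set.Ioc (min a b) (max a b))) :=
      hφ'.restrict _
    have h2 : MemLp f 1 (volume.restrict (Set.Ioc (min a b) (max a b))) :=
      h1.mono_exponent one_le_two
    exact memLp_one_iff_integrable.mp h2
  -- volume of sections
  have hsets : ∀ z t : ℝ, MeasurableSet {x : ℝ | t ∈ Set.uIoc (x - z) x} ∧
      volume {x : ℝ | t ∈ Set.uIoc (x - z) x} = ENNReal.ofReal |z| := by
    intro z t
    rcases le_total 0 z with hz | hz
    · have hset : {x : ℝ | t ∈ Set.uIoc (x - z) x} = Set.Ico t (t + z) := by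
        ext x
        simp only [Set.mem_setOf_eq, Set.mem_uIoc, Set.mem_Ico]
        constructor
        · rintro (⟨h1, h2⟩ | ⟨h1, h2⟩) <;> constructor <;> linarith
        · rintro ⟨h1, h2⟩; left; constructor <;> linarith
      refine ⟨hset ▸ measurableSet_Ico, ?_⟩
      rw [hset, Real.volume_Ico, abs_of_nonneg hz]
      congr 1; ring
    · have hset : {x : ℝ | t ∈ Set.uIoc (x - z) x} = Set.Ico (t + z) t := by
        ext x
        simp only [Set.mem_setOf_eq, Set.mem_uIoc, Set.mem_Ico]
        constructor
        · rintro (⟨h1, h2⟩ | ⟨h1, h2⟩) <;> constructor <;> linarith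
        · rintro ⟨h1, h2⟩; right; constructor <;> linarith
      refine ⟨hset ▸ measurableSet_Ico, ?_⟩
      rw [hset, Real.volume_Ico, abs_of_nonpos hz]
      congr 1; ring
  -- measurability of the product set
  have hS : ∀ z : ℝ, MeasurableSet {p : ℝ × ℝ | p.2 ∈ Set.uIoc (p.1 - z) p.1} := by
    intro z
    have : {p : ℝ × ℝ | p.2 ∈ Set.uIoc (p.1 - z) p.1} =
        ({p : ℝ × ℝ | p.1 - z < p.2} ∩ {p : ℝ × ℝ | p.2 ≤ p.1}) ∪
          ({p : ℝ × ℝ | p.1 < p.2} ∩ {p : ℝ × ℝ | p.2 ≤ p.1 - z}) := by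
      ext p; simp [Set.mem_uIoc]
    rw [this]
    exact (((measurableSet_lt (measurable_fst.sub measurable_const) measurable_snd).inter
      (measurableSet_le measurable_snd measurable_fst)).union
      ((measurableSet_lt measurable_fst measurable_snd).inter
        (measurableSet_le measurable_snd (measurable_fst.sub measurable_const))))
  -- Fubini: swapping the section integrals
  have swapB : ∀ z : ℝ,
      (∫⁻ x : ℝ, ∫⁻ t in Set.uIoc (x - z) x, ENNReal.ofReal (f t ^ 2))
        = ENNReal.ofReal |z| * I := by
    intro z
    have hmeas : AEMeasurable (Function.uncurry fun x t : ℝ =>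
        Set.indicator {p : ℝ × ℝ | p.2 ∈ Set.uIoc (p.1 - z) p.1}
          (fun p => ENNReal.ofReal (f p.2 ^ 2)) (x, t))
        ((volume : Measure ℝ).prod volume) :=
      ((hg.comp measurable_snd).indicator (hS z)).aemeasurable
    calc (∫⁻ x : ℝ, ∫⁻ t in Set.uIoc (x - z) x, ENNReal.ofReal (f t ^ 2))
        = ∫⁻ x : ℝ, ∫⁻ t : ℝ, Set.indicator {p : ℝ × ℝ | p.2 ∈ Set.uIoc (p.1 - z) p.1}
            (fun p => ENNReal.ofReal (f p.2 ^ 2)) (x, t) := by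
          refine lintegral_congr fun x => ?_
          rw [← lintegral_indicator measurableSet_uIoc]
          refine lintegral_congr fun t => ?_
          simp only [Set.indicator_apply, Set.mem_setOf_eq]
      _ = ∫⁻ t : ℝ, ∫⁻ x : ℝ, Set.indicator {p : ℝ × ℝ | p.2 ∈ Set.uIoc (p.1 - z) p.1}
            (fun p => ENNReal.ofReal (f p.2 ^ 2)) (x, t) := lintegral_lintegral_swap hmeas
      _ = ∫⁻ t : ℝ, ENNReal.ofReal (f t ^ 2) * ENNReal.ofReal |z| := by
          refine lintegral_congr fun t => ?_
          have hrw : (fun x : ℝ => Set.indicator {p : ℝ × ℝ | p.2 ∈ Set.uIoc (p.1 - z) p.1}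
              (fun p => ENNReal.ofReal (f p.2 ^ 2)) (x, t))
              = Set.indicator {x : ℝ | t ∈ Set.uIoc (x - z) x}
                  (fun _ => ENNReal.ofReal (f t ^ 2)) := by
            ext x
            simp only [Set.indicator_apply, Set.mem_setOf_eq]
          rw [hrw, lintegral_indicator (hsets z t).1, setLIntegral_const, (hsets z t).2]
      _ = ENNReal.ofReal |z| * I := by
          rw [lintegral_mul_const _ hg, mul_comm]
  -- key pointwise estimate from FTC + Cauchy–Schwarz
  have key : ∀ z x : ℝ, ENNReal.ofReal ((φ x - φ (x - z)) ^ 2)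
      ≤ ENNReal.ofReal |z| * ∫⁻ t in Set.uIoc (x - z) x, ENNReal.ofReal (f t ^ 2) := by
    intro z x
    set μ := (volume : Measure ℝ).restrict (Set.uIoc (x - z) x) with hμ
    have hμuniv : μ Set.univ = ENNReal.ofReal |z| := by
      rw [hμ, Measure.restrict_apply_univ]
      have : Set.uIoc (x - z) x = Set.Ioc (min (x - z) x) (max (x - z) x) := rfl
      rw [this, Real.volume_Ioc]
      congr 1
      rw [max_sub_min_eq_abs]
      simp [abs_sub_comm]
    have hfi : IntegrableOn f (Set.uIoc (x - z) x) volume :=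
      intervalIntegrable_iff.mp (hint (x - z) x)
    have hftc : φ x - φ (x - z) = ∫ t in (x - z)..x, f t :=
      (intervalIntegral.integral_deriv_eq_sub (fun t _ => hφ t) (hint (x - z) x)).symm
    have habs : |φ x - φ (x - z)| ≤ ∫ t in Set.uIoc (x - z) x, |f t| := by
      rw [hftc]
      simpa [Real.norm_eq_abs] using
        intervalIntegral.norm_integral_le_integral_norm_uIoc
          (f := f) (a := x - z) (b := x) (μ := volume)
    have h1 : ENNReal.ofReal |φ x - φ (x - z)| ≤ ∫⁻ t, ENNReal.ofReal |f t| ∂μ := by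
      calc ENNReal.ofReal |φ x - φ (x - z)|
          ≤ ENNReal.ofReal (∫ t in Set.uIoc (x - z) x, |f t|) :=
            ENNReal.ofReal_le_ofReal habs
        _ = ∫⁻ t, ENNReal.ofReal |f t| ∂μ := by
            rw [ofReal_integral_eq_lintegral_ofReal hfi.abs
              (ae_of_all _ fun t => abs_nonneg _)]
    have hpq : Real.HolderConjugate 2 2 := Real.holderConjugate_iff.mpr ⟨one_lt_two, by norm_num⟩
    have hH := ENNReal.lintegral_mul_le_Lp_mul_Lq μ hpq
      (f := fun t => ENNReal.ofReal |f t|) (g := fun _ => (1 : ℝ≥0∞))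
      (hfm.abs.ennreal_ofReal.aemeasurable) aemeasurable_const
    have hpt : ∀ t : ℝ, ENNReal.ofReal |f t| ^ (2 : ℝ) = ENNReal.ofReal (f t ^ 2) := by
      intro t
      rw [ENNReal.ofReal_rpow_of_nonneg (abs_nonneg _) (by norm_num)]
      congr 1
      rw [show ((2 : ℝ)) = ((2 : ℕ) : ℝ) by norm_num, Real.rpow_natCast, sq_abs]
    have hH' : (∫⁻ t, ENNReal.ofReal |f t| ∂μ)
        ≤ (∫⁻ t, ENNReal.ofReal (f t ^ 2) ∂μ) ^ (1 / 2 : ℝ)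
            * (ENNReal.ofReal |z|) ^ (1 / 2 : ℝ) := by
      have := hH
      simp only [Pi.mul_apply, mul_one, ENNReal.one_rpow, lintegral_one, hμuniv] at this
      calc (∫⁻ t, ENNReal.ofReal |f t| ∂μ)
          ≤ (∫⁻ t, ENNReal.ofReal |f t| ^ (2 : ℝ) ∂μ) ^ (1 / 2 : ℝ)
              * (ENNReal.ofReal |z|) ^ (1 / 2 : ℝ) := this
        _ = (∫⁻ t, ENNReal.ofReal (f t ^ 2) ∂μ) ^ (1 / 2 : ℝ)
              * (ENNReal.ofReal |z|) ^ (1 / 2 : ℝ) := by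
            congr 2
            exact lintegral_congr fun t => hpt t
    have hsq : ENNReal.ofReal ((φ x - φ (x - z)) ^ 2)
        = (ENNReal.ofReal |φ x - φ (x - z)|) ^ 2 := by
      rw [← ENNReal.ofReal_pow (abs_nonneg _), sq_abs]
    rw [hsq]
    calc (ENNReal.ofReal |φ x - φ (x - z)|) ^ 2
        ≤ ((∫⁻ t, ENNReal.ofReal (f t ^ 2) ∂μ) ^ (1 / 2 : ℝ)
            * (ENNReal.ofReal |z|) ^ (1 / 2 : ℝ)) ^ 2 :=
          pow_le_pow_left' (h1.trans hH') 2
      _ = (∫⁻ t, ENNReal.ofReal (f t ^ 2) ∂μ) * ENNReal.ofReal |z| := by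
          rw [mul_pow, ← ENNReal.rpow_natCast (_ ^ (1 / 2 : ℝ)) 2,
            ← ENNReal.rpow_natCast ((ENNReal.ofReal |z|) ^ (1 / 2 : ℝ)) 2,
            ← ENNReal.rpow_mul, ← ENNReal.rpow_mul]
          norm_num
      _ = ENNReal.ofReal |z| * ∫⁻ t in Set.uIoc (x - z) x, ENNReal.ofReal (f t ^ 2) := by
          rw [mul_comm]
  -- measurability of the main product integrand
  have hGm : Measurable fun p : ℝ × ℝ =>
      ENNReal.ofReal (J p.2 * (φ p.1 - φ (p.1 - p.2)) ^ 2) :=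
    ((hJmeas.comp measurable_snd).mul
      (((hφm.comp measurable_fst).sub
        (hφm.comp (measurable_fst.sub measurable_snd))).pow_const 2)).ennreal_ofReal
  calc (∫⁻ x : ℝ, ∫⁻ y : ℝ, ENNReal.ofReal (J (x - y) * (φ x - φ y) ^ 2))
      = ∫⁻ x : ℝ, ∫⁻ z : ℝ, ENNReal.ofReal (J z * (φ x - φ (x - z)) ^ 2) := by
        refine lintegral_congr fun x => ?_
        have hmp := Measure.measurePreserving_sub_left (volume : Measure ℝ) x
        have hgmeas : Measurable fun z : ℝ =>
            ENNReal.ofReal (J z * (φ x - φ (x - z)) ^ 2) :=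
          (hJmeas.mul ((measurable_const.sub
            (hφm.comp (measurable_const.sub measurable_id))).pow_const 2)).ennreal_ofReal
        rw [← hmp.lintegral_comp hgmeas]
        refine lintegral_congr fun y => ?_
        simp [sub_sub_cancel]
    _ = ∫⁻ z : ℝ, ∫⁻ x : ℝ, ENNReal.ofReal (J z * (φ x - φ (x - z)) ^ 2) :=
        lintegral_lintegral_swap hGm.aemeasurable
    _ = ∫⁻ z : ℝ, ENNReal.ofReal (J z) * ∫⁻ x : ℝ, ENNReal.ofReal ((φ x - φ (x - z)) ^ 2) := by
        refine lintegral_congr fun z => ?_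
        rw [← lintegral_const_mul' _ _ ENNReal.ofReal_ne_top]
        refine lintegral_congr fun x => ?_
        rw [← ENNReal.ofReal_mul (hJnonneg z)]
    _ ≤ ∫⁻ z : ℝ, ENNReal.ofReal (J z) * (ENNReal.ofReal (z ^ 2) * I) := by
        refine lintegral_mono fun z => ?_
        refine mul_le_mul_right ?_ _
        calc (∫⁻ x : ℝ, ENNReal.ofReal ((φ x - φ (x - z)) ^ 2))
            ≤ ∫⁻ x : ℝ, ENNReal.ofReal |z|
                * ∫⁻ t in Set.uIoc (x - z) x, ENNReal.ofReal (f t ^ 2) :=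
              lintegral_mono (key z)
          _ = ENNReal.ofReal |z|
                * ∫⁻ x : ℝ, ∫⁻ t in Set.uIoc (x - z) x, ENNReal.ofReal (f t ^ 2) :=
              lintegral_const_mul' _ _ ENNReal.ofReal_ne_top
          _ = ENNReal.ofReal |z| * (ENNReal.ofReal |z| * I) := by rw [swapB z]
          _ = ENNReal.ofReal (z ^ 2) * I := by
              rw [← mul_assoc, ← ENNReal.ofReal_mul (abs_nonneg z), abs_mul_abs_self,
                ← sq]
    _ = (∫⁻ z : ℝ, ENNReal.ofReal (J z * z ^ 2)) * I := by
        have hm : Measurable fun z : ℝ => ENNReal.ofReal (J z * z ^ 2) := by fun_prop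
        rw [← lintegral_mul_const _ hm]
        refine lintegral_congr fun z => ?_
        rw [ENNReal.ofReal_mul (hJnonneg z), mul_assoc]
end

section
/- Let K : ℝ → [0,∞) be integrable with ∫_ℝ K(z) dz = 1, let p ≥ 2 be a real number, and let u : ℝ → [0,∞) be measurable with u ∈ L¹(ℝ) ∩ L^∞(ℝ). Then ∫_ℝ ∫_ℝ K(x−y) u(y) u(x)^{p−1} dx dy ≤ (2/p) ∫_ℝ ∫_ℝ K(x−y) u(y)^{p/2} u(x)^{p/2} dx dy + (1 − 2/p) ∫_ℝ u(x)^p dx. -/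
open MeasureTheory
open scoped Convolution

lemma aux_young {p : ℝ} (hp : 2 ≤ p) {a b : ℝ} (ha : 0 ≤ a) (hb : 0 ≤ b) :
    a * b ^ (p - 1) ≤ 2 / p * (a ^ (p / 2) * b ^ (p / 2)) + (1 - 2 / p) * b ^ p := by
  rcases eq_or_lt_of_le hp with h2 | h2
  · subst h2
    norm_num [Real.rpow_one]
  · have hp0 : (0:ℝ) < p := by linarith
    have hp2 : (0:ℝ) < p - 2 := by linarith
    have hconj : (p / 2).HolderConjugate (p / (p - 2)) := by
      rw [Real.holderConjugate_iff]; constructor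
      · rw [lt_div_iff₀ (by norm_num)]; linarith
      · field_simp; ring
    have key := Real.young_inequality_of_nonneg (mul_nonneg ha hb)
      (Real.rpow_nonneg hb (p - 2)) hconj
    have e1 : a * b * b ^ (p - 2) = a * b ^ (p - 1) := by
      have : b ^ (p - 1) = b ^ (1 + (p - 2)) := by ring_nf
      rw [this, Real.rpow_add' hb (by linarith), Real.rpow_one]
      ring
    have e2 : (a * b) ^ (p / 2) = a ^ (p / 2) * b ^ (p / 2) := Real.mul_rpow ha hb
    have e3 : (b ^ (p - 2)) ^ (p / (p - 2)) = b ^ p := by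
      rw [← Real.rpow_mul hb]; congr 1; field_simp
    rw [e1, e2, e3] at key
    have e4 : a ^ (p / 2) * b ^ (p / 2) / (p / 2) = 2 / p * (a ^ (p / 2) * b ^ (p / 2)) := by
      field_simp
    have e5 : b ^ p / (p / (p - 2)) = (1 - 2 / p) * b ^ p := by
      rw [div_div_eq_mul_div]; field_simp
    rw [e4, e5] at key
    exact key

/-- For an integrable nonnegative kernel `K` of mass one, a real `p ≥ 2` and a nonnegative
`u ∈ L¹(ℝ) ∩ L^∞(ℝ)`:
`∫∫ K(x-y) u(y) u(x)^{p-1} ≤ (2/p) ∫∫ K(x-y) u(y)^{p/2} u(x)^{p/2} + (1-2/p) ∫ u^p`. -/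
theorem double_integral_kernel_power_le
    (K : ℝ → ℝ) (hKint : Integrable K) (hKnonneg : ∀ z, 0 ≤ K z)
    (hKmass : ∫ z : ℝ, K z = 1)
    (p : ℝ) (hp : 2 ≤ p)
    (u : ℝ → ℝ) (hum : Measurable u) (hunonneg : ∀ x, 0 ≤ u x)
    (hu1 : Integrable u) (huinf : MemLp u ⊤ (volume : Measure ℝ)) :
    (∫ x : ℝ, ∫ y : ℝ, K (x - y) * u y * u x ^ (p - 1))
      ≤ (2 / p) * (∫ x : ℝ, ∫ y : ℝ, K (x - y) * u y ^ (p / 2) * u x ^ (p / 2))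
          + (1 - 2 / p) * ∫ x : ℝ, u x ^ p := by
  have hp0 : (0:ℝ) < p := by linarith
  set C : ℝ := (eLpNormEssSup u volume).toReal with hCdef
  have hCfin : eLpNormEssSup u volume < ⊤ := by
    have := huinf.2
    rwa [eLpNorm_exponent_top] at this
  have hC : ∀ᵐ x : ℝ, u x ≤ C := by
    filter_upwards [ae_le_eLpNormEssSup (f := u) (μ := volume)] with x hx
    have h1 := ENNReal.toReal_mono hCfin.ne hx
    simpa [Real.norm_of_nonneg (hunonneg x)] using h1
  have hCnn : 0 ≤ C := ENNReal.toReal_nonneg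
  -- integrability of powers of u
  have hint : ∀ r : ℝ, 1 ≤ r → Integrable (fun x => u x ^ r) := by
    intro r hr
    refine Integrable.mono' (hu1.const_mul (C ^ (r - 1))) ?_ ?_
    · exact (by fun_prop : Measurable fun x => u x ^ r).aestronglyMeasurable
    · filter_upwards [hC] with x hx
      rw [Real.norm_of_nonneg (Real.rpow_nonneg (hunonneg x) r)]
      have e := Real.rpow_add' (hunonneg x) (show r - 1 + 1 ≠ 0 by linarith)
      rw [show r - 1 + 1 = r from by ring, Real.rpow_one] at e
      rw [e]
      exact mul_le_mul_of_nonneg_right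
        (Real.rpow_le_rpow (hunonneg x) hx (by linarith)) (hunonneg x)
  set v : ℝ → ℝ := fun x => u x ^ (p / 2) with hvdef
  have hvm : Measurable v := by fun_prop
  have hvnn : ∀ x, 0 ≤ v x := fun x => Real.rpow_nonneg (hunonneg x) _
  have hv : Integrable v := hint _ (by rw [le_div_iff₀ (by norm_num : (0:ℝ) < 2)]; linarith)
  have hvC : ∀ᵐ x : ℝ, v x ≤ C ^ (p / 2) := by
    filter_upwards [hC] with x hx
    exact Real.rpow_le_rpow (hunonneg x) hx (by positivity)
  have hup : Integrable (fun x => u x ^ p) := hint p (by linarith)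
  -- convolution integrability
  have hconv : Integrable (fun x : ℝ => ∫ y : ℝ, K (x - y) * v y) := by
    have h := hv.integrable_convolution (ContinuousLinearMap.mul ℝ ℝ) hKint
    have : (v ⋆[ContinuousLinearMap.mul ℝ ℝ, volume] K)
        = fun x => ∫ y : ℝ, K (x - y) * v y := by
      funext x
      rw [convolution_def]
      simp only [ContinuousLinearMap.mul_apply']
      exact integral_congr_ae (Filter.Eventually.of_forall fun y => mul_comm _ _)
    rwa [this] at h
  have hconvnn : ∀ x : ℝ, 0 ≤ ∫ y : ℝ, K (x - y) * v y := fun x =>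
    integral_nonneg fun y => mul_nonneg (hKnonneg _) (hvnn y)
  -- integrability of x ↦ ∫ y, K (x - y) * v y * v x
  have hG : Integrable (fun x : ℝ => ∫ y : ℝ, K (x - y) * v y * v x) := by
    have h1 : Integrable (fun x : ℝ => (∫ y : ℝ, K (x - y) * v y) * v x) := by
      refine Integrable.mono' (hconv.mul_const (C ^ (p / 2))) ?_ ?_
      · exact (hconv.aestronglyMeasurable.mul hvm.aestronglyMeasurable)
      · filter_upwards [hvC] with x hx
        rw [Real.norm_of_nonneg (mul_nonneg (hconvnn x) (hvnn x))]
        exact mul_le_mul_of_nonneg_left hx (hconvnn x)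
    have e : (fun x : ℝ => ∫ y : ℝ, K (x - y) * v y * v x)
        = fun x : ℝ => (∫ y : ℝ, K (x - y) * v y) * v x := by
      funext x
      rw [← integral_mul_const]
    rwa [e]
  -- inner inequality, for every x
  have hBx : ∀ x : ℝ, (∫ y : ℝ, K (x - y) * u y * u x ^ (p - 1))
      ≤ 2 / p * (∫ y : ℝ, K (x - y) * v y * v x) + (1 - 2 / p) * u x ^ p := by
    intro x
    have hKx : Integrable (fun y : ℝ => K (x - y)) := hKint.comp_sub_left x
    have hI1 : Integrable (fun y : ℝ => K (x - y) * v y * v x) := by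
      refine Integrable.mul_const ?_ (v x)
      refine Integrable.mono' (hKx.mul_const (C ^ (p / 2))) ?_ ?_
      · exact hKx.aestronglyMeasurable.mul hvm.aestronglyMeasurable
      · filter_upwards [hvC] with y hy
        rw [Real.norm_of_nonneg (mul_nonneg (hKnonneg _) (hvnn y))]
        exact mul_le_mul_of_nonneg_left hy (hKnonneg _)
    have hI2 : Integrable (fun y : ℝ => K (x - y) * u x ^ p) := hKx.mul_const _
    have hle : ∀ y : ℝ, K (x - y) * u y * u x ^ (p - 1)
        ≤ 2 / p * (K (x - y) * v y * v x) + (1 - 2 / p) * (K (x - y) * u x ^ p) := by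
      intro y
      have h := aux_young hp (hunonneg y) (hunonneg x)
      have h2 := mul_le_mul_of_nonneg_left h (hKnonneg (x - y))
      calc K (x - y) * u y * u x ^ (p - 1)
          = K (x - y) * (u y * u x ^ (p - 1)) := by ring
        _ ≤ K (x - y) * (2 / p * (u y ^ (p / 2) * u x ^ (p / 2)) + (1 - 2 / p) * u x ^ p) := h2
        _ = 2 / p * (K (x - y) * v y * v x) + (1 - 2 / p) * (K (x - y) * u x ^ p) := by
            simp only [hvdef]; ring
    have hmono : (∫ y : ℝ, K (x - y) * u y * u x ^ (p - 1))
        ≤ ∫ y : ℝ, (2 / p * (K (x - y) * v y * v x) + (1 - 2 / p) * (K (x - y) * u x ^ p)) := by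
      refine integral_mono_of_nonneg ?_ ((hI1.const_mul _).add (hI2.const_mul _)) ?_
      · exact Filter.Eventually.of_forall fun y =>
          mul_nonneg (mul_nonneg (hKnonneg _) (hunonneg y)) (Real.rpow_nonneg (hunonneg x) _)
      · exact Filter.Eventually.of_forall hle
    calc (∫ y : ℝ, K (x - y) * u y * u x ^ (p - 1))
        ≤ ∫ y : ℝ, (2 / p * (K (x - y) * v y * v x) + (1 - 2 / p) * (K (x - y) * u x ^ p)) :=
          hmono
      _ = 2 / p * (∫ y : ℝ, K (x - y) * v y * v x)
            + (1 - 2 / p) * ((∫ y : ℝ, K (x - y)) * u x ^ p) := by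
          rw [integral_add (hI1.const_mul _) (hI2.const_mul _), integral_const_mul,
            integral_const_mul, integral_mul_const, integral_mul_const]
      _ = 2 / p * (∫ y : ℝ, K (x - y) * v y * v x) + (1 - 2 / p) * u x ^ p := by
          rw [integral_sub_left_eq_self K volume x, hKmass, one_mul]
  -- outer inequality
  have final : (∫ x : ℝ, ∫ y : ℝ, K (x - y) * u y * u x ^ (p - 1))
      ≤ ∫ x : ℝ, (2 / p * (∫ y : ℝ, K (x - y) * v y * v x) + (1 - 2 / p) * u x ^ p) := by
    refine integral_mono_of_nonneg ?_ ((hG.const_mul _).add (hup.const_mul _)) ?_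
    · exact Filter.Eventually.of_forall fun x => integral_nonneg fun y =>
        mul_nonneg (mul_nonneg (hKnonneg _) (hunonneg y)) (Real.rpow_nonneg (hunonneg x) _)
    · exact Filter.Eventually.of_forall hBx
  calc (∫ x : ℝ, ∫ y : ℝ, K (x - y) * u y * u x ^ (p - 1))
      ≤ ∫ x : ℝ, (2 / p * (∫ y : ℝ, K (x - y) * v y * v x) + (1 - 2 / p) * u x ^ p) := final
    _ = (2 / p) * (∫ x : ℝ, ∫ y : ℝ, K (x - y) * u y ^ (p / 2) * u x ^ (p / 2))
          + (1 - 2 / p) * ∫ x : ℝ, u x ^ p := by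
        rw [integral_add (hG.const_mul _) (hup.const_mul _), integral_const_mul,
          integral_const_mul]
end

section
/- Let K : ℝ → [0,∞) be integrable with ∫_ℝ K(z) dz = 1, set J(z) = (K(z) + K(−z))/2, let p ≥ 2 be a real number, and let u : ℝ → [0,∞) be measurable with u ∈ L¹(ℝ) ∩ L^∞(ℝ). Then ∫_ℝ ((K*u)(x) − u(x)) u(x)^{p−1} dx ≤ −(1/p) ∫_ℝ ∫_ℝ J(x−y) (u(x)^{p/2} − u(y)^{p/2})² dx dy. -/
open MeasureTheory
open scoped ENNReal NNReal

private lemma dkey_rpow_sq {a : ℝ} (ha : 0 ≤ a) {p : ℝ} (hp : 0 < p) :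
    (a ^ (p/2))^2 = a ^ p := by
  have h : p/2 + p/2 = p := by ring
  rw [sq, ← Real.rpow_add' ha (by rw [h]; exact hp.ne'), h]

private lemma dkey (p : ℝ) (hp : 2 ≤ p) {a b : ℝ} (ha : 0 ≤ a) (hb : 0 ≤ b) :
    (b - a) * a ^ (p - 1) ≤ (b ^ p - a ^ p) / p - (a ^ (p/2) - b ^ (p/2))^2 / p := by
  have hp0 : (0:ℝ) < p := by linarith
  have hs1 : (1:ℝ) ≤ p/2 := by linarith
  have hb2 : (b ^ (p/2))^2 = b ^ p := dkey_rpow_sq hb hp0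
  have ha2 : (a ^ (p/2))^2 = a ^ p := dkey_rpow_sq ha hp0
  rcases ha.eq_or_lt with h0 | hapos
  · rw [← h0]
    rw [Real.zero_rpow (by intro h; rw [sub_eq_zero] at h; linarith : p - 1 ≠ 0),
      Real.zero_rpow hp0.ne', Real.zero_rpow (by positivity : p/2 ≠ 0)]
    rw [zero_sub, neg_sq, hb2]
    simp
  · set s := p/2 with hs
    have has : 0 < a ^ s := Real.rpow_pos_of_pos hapos s
    have bern := one_add_mul_self_le_rpow_one_add
      (s := b/a - 1) (by have : 0 ≤ b/a := div_nonneg hb hapos.le; linarith) hs1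
    rw [show (1 + (b/a - 1)) = b/a by ring, Real.div_rpow hb hapos.le] at bern
    have hpow : a ^ (s - 1) = a ^ s / a := by rw [Real.rpow_sub hapos, Real.rpow_one]
    have tangent : a ^ s + s * a^(s-1) * (b - a) ≤ b ^ s := by
      have := mul_le_mul_of_nonneg_right bern has.le
      calc a ^ s + s * a^(s-1) * (b - a) = (1 + s * (b/a - 1)) * a ^ s := by
            rw [hpow]; field_simp
        _ ≤ (b ^ s / a ^ s) * a ^ s := this
        _ = b ^ s := by field_simp
    have h2 : s * a^(s-1) * (b-a) ≤ b ^ s - a ^ s := by linarith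
    have h3 := mul_le_mul_of_nonneg_right h2 has.le
    have hs0 : (0:ℝ) < s := by linarith
    have key : (b - a) * (a ^ (s-1) * a ^ s) ≤ 2 * a ^ s * (b ^ s - a ^ s) / p := by
      calc (b-a)*(a^(s-1)*a^s) = (s*a^(s-1)*(b-a)*a^s)/s := by field_simp
        _ ≤ ((b^s - a^s)*a^s)/s := by gcongr
        _ = 2*a^s*(b^s - a^s)/p := by rw [show p = 2*s by rw [hs]; ring]; field_simp
    have hap : a ^ (p-1) = a^(s-1) * a^s := by
      rw [← Real.rpow_add hapos]; congr 1; rw [hs]; ring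
    calc (b - a) * a ^ (p-1) = (b-a) * (a^(s-1)*a^s) := by rw [hap]
      _ ≤ 2*a^s*(b^s - a^s)/p := key
      _ = (b ^ p - a ^ p) / p - (a ^ s - b ^ s)^2 / p := by
          rw [← hb2, ← ha2]; ring

private lemma aux_main
    (K : ℝ → ℝ) (hKm : Measurable K) (hKint : Integrable K)
    (hKnonneg : ∀ z, 0 ≤ K z) (hKmass : ∫ z : ℝ, K z = 1)
    (p : ℝ) (hp : 2 ≤ p)
    (u : ℝ → ℝ) (hum : Measurable u) (hunonneg : ∀ x, 0 ≤ u x)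
    (hu1 : Integrable u) (M : ℝ) (hM : ∀ x, u x ≤ M) :
    (∫ x : ℝ, ((∫ y : ℝ, K y * u (x - y)) - u x) * u x ^ (p - 1))
      ≤ -(1 / p) * ∫ x : ℝ, ∫ y : ℝ, ((K (x - y) + K (-(x - y))) / 2) *
          (u x ^ (p / 2) - u y ^ (p / 2)) ^ 2 := by
  have hp0 : (0:ℝ) < p := by linarith
  have hM0 : (0:ℝ) ≤ M := le_trans (hunonneg 0) (hM 0)
  set μ2 : Measure (ℝ × ℝ) := (volume : Measure ℝ).prod volume with hμ2
  have hrnn : ∀ (t : ℝ) (r : ℝ), 0 ≤ u t ^ r := fun t r => Real.rpow_nonneg (hunonneg t) r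
  have hMnn : ∀ r : ℝ, (0:ℝ) ≤ M ^ r := fun r => Real.rpow_nonneg hM0 r
  have hurm : ∀ r : ℝ, 0 ≤ r → Measurable fun t : ℝ => u t ^ r := by
    intro r hr
    have hc : Continuous fun t : ℝ => t ^ r :=
      continuous_iff_continuousAt.mpr fun x => Real.continuousAt_rpow_const x r (Or.inr hr)
    exact hc.measurable.comp hum
  have hKq : Measurable fun q : ℝ × ℝ => K (q.1 - q.2) :=
    hKm.comp (measurable_fst.sub measurable_snd)
  -- master product-integrability facts
  have hKu2 : Integrable (fun q : ℝ × ℝ => K (q.1 - q.2) * u q.2) μ2 := by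
    have h0 : Integrable (fun z : ℝ × ℝ => K z.1 * u z.2) μ2 := hKint.mul_prod hu1
    have hmp := measurePreserving_sub_prod (volume : Measure ℝ) volume
    have := (hmp.integrable_comp h0.aestronglyMeasurable).mpr h0
    simpa [Function.comp_def] using this
  have hKu1 : Integrable (fun q : ℝ × ℝ => K (q.1 - q.2) * u q.1) μ2 := by
    have hKneg : Integrable (fun z : ℝ => K (-z)) := hKint.comp_neg
    have h0 : Integrable (fun z : ℝ × ℝ => K (-z.1) * u z.2) μ2 := hKneg.mul_prod hu1
    have hmp := measurePreserving_sub_prod (volume : Measure ℝ) volume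
    have h1 : Integrable (fun q : ℝ × ℝ => K (-(q.1 - q.2)) * u q.2) μ2 := by
      have := (hmp.integrable_comp h0.aestronglyMeasurable).mpr h0
      simpa [Function.comp_def] using this
    have hsw : MeasurePreserving (Prod.swap : ℝ × ℝ → ℝ × ℝ) μ2 μ2 :=
      Measure.measurePreserving_swap
    have h2 := (hsw.integrable_comp h1.aestronglyMeasurable).mpr h1
    have heq : ((fun q : ℝ × ℝ => K (-(q.1 - q.2)) * u q.2) ∘ Prod.swap) =
        fun q : ℝ × ℝ => K (q.1 - q.2) * u q.1 := by
      funext q; simp [Function.comp_def, neg_sub]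
    rwa [heq] at h2
  have hdom : ∀ (f : ℝ × ℝ → ℝ), Measurable f → ∀ (c : ℝ),
      (∀ q : ℝ × ℝ, |f q| ≤ c * (K (q.1 - q.2) * u q.2) + c * (K (q.1 - q.2) * u q.1)) →
      Integrable f μ2 := by
    intro f hf c hb
    refine ((hKu2.const_mul c).add (hKu1.const_mul c)).mono' hf.aestronglyMeasurable ?_
    exact ae_of_all _ fun q => by simpa [Real.norm_eq_abs] using hb q
  have hpowle : ∀ (t : ℝ) (r : ℝ), 1 ≤ r → u t ^ r ≤ M ^ (r - 1) * u t := by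
    intro t r hr
    have h1 : u t ^ r = u t ^ (r - 1) * u t := by
      have h2 := Real.rpow_add' (hunonneg t)
        (show (r-1) + 1 ≠ 0 by rw [sub_add_cancel]; intro h; rw [h] at hr; linarith)
      rw [sub_add_cancel, Real.rpow_one] at h2
      exact h2
    rw [h1]
    exact mul_le_mul_of_nonneg_right
      (Real.rpow_le_rpow (hunonneg t) (hM t) (by linarith)) (hunonneg t)
  have hpowM : ∀ (t : ℝ) (r : ℝ), 0 ≤ r → u t ^ r ≤ M ^ r :=
    fun t r hr => Real.rpow_le_rpow (hunonneg t) (hM t) hr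
  set F : ℝ × ℝ → ℝ := fun q => K (q.1 - q.2) * ((u q.2 - u q.1) * u q.1 ^ (p - 1)) with hF
  set P1 : ℝ × ℝ → ℝ := fun q => K (q.1 - q.2) * u q.2 ^ p with hP1
  set P2 : ℝ × ℝ → ℝ := fun q => K (q.1 - q.2) * u q.1 ^ p with hP2
  set P3 : ℝ × ℝ → ℝ := fun q => K (q.1 - q.2) * (u q.1 ^ (p/2) - u q.2 ^ (p/2)) ^ 2 with hP3
  set G : ℝ × ℝ → ℝ := fun q => (P1 q - P2 q - P3 q) / p with hG
  have hFint : Integrable F μ2 := by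
    refine hdom F ?_ (M ^ (p-1)) ?_
    · exact hKq.mul (((hum.comp measurable_snd).sub (hum.comp measurable_fst)).mul
        ((hurm (p-1) (by linarith)).comp measurable_fst))
    · rintro ⟨x, y⟩
      simp only [hF]
      have hK := hKnonneg (x - y)
      have h2 : u x ^ (p-1) ≤ M ^ (p-1) := hpowM x _ (by linarith)
      have h3 : |u y - u x| ≤ u y + u x :=
        abs_le.mpr ⟨by linarith [hunonneg x, hunonneg y], by linarith [hunonneg x, hunonneg y]⟩
      calc |K (x-y) * ((u y - u x) * u x ^ (p-1))|
          = K (x-y) * (|u y - u x| * u x ^ (p-1)) := by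
            rw [abs_mul, abs_of_nonneg hK, abs_mul, abs_of_nonneg (hrnn x (p-1))]
        _ ≤ K (x-y) * ((u y + u x) * M ^ (p-1)) := by
            refine mul_le_mul_of_nonneg_left ?_ hK
            exact mul_le_mul h3 h2 (hrnn x (p-1))
              (by linarith [hunonneg x, hunonneg y])
        _ = M^(p-1) * (K (x-y) * u y) + M^(p-1) * (K (x-y) * u x) := by ring
  have hP1int : Integrable P1 μ2 := by
    refine hdom P1 (hKq.mul ((hurm p (by linarith)).comp measurable_snd)) (M ^ (p-1)) ?_
    rintro ⟨x, y⟩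
    simp only [hP1]
    have hK := hKnonneg (x - y)
    rw [abs_of_nonneg (mul_nonneg hK (hrnn y p))]
    have h1 : K (x-y) * u y ^ p ≤ K (x-y) * (M ^ (p-1) * u y) :=
      mul_le_mul_of_nonneg_left (hpowle y p (by linarith)) hK
    have h2 : 0 ≤ M^(p-1) * (K (x-y) * u x) :=
      mul_nonneg (hMnn _) (mul_nonneg hK (hunonneg x))
    nlinarith [h1, h2]
  have hP2int : Integrable P2 μ2 := by
    refine hdom P2 (hKq.mul ((hurm p (by linarith)).comp measurable_fst)) (M ^ (p-1)) ?_
    rintro ⟨x, y⟩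
    simp only [hP2]
    have hK := hKnonneg (x - y)
    rw [abs_of_nonneg (mul_nonneg hK (hrnn x p))]
    have h1 : K (x-y) * u x ^ p ≤ K (x-y) * (M ^ (p-1) * u x) :=
      mul_le_mul_of_nonneg_left (hpowle x p (by linarith)) hK
    have h2 : 0 ≤ M^(p-1) * (K (x-y) * u y) :=
      mul_nonneg (hMnn _) (mul_nonneg hK (hunonneg y))
    nlinarith [h1, h2]
  have hP3int : Integrable P3 μ2 := by
    refine hdom P3 (hKq.mul ((((hurm (p/2) (by linarith)).comp measurable_fst).sub
      ((hurm (p/2) (by linarith)).comp measurable_snd)).pow_const 2)) (M ^ (p-1)) ?_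
    rintro ⟨x, y⟩
    simp only [hP3]
    have hK := hKnonneg (x - y)
    rw [abs_of_nonneg (mul_nonneg hK (sq_nonneg _))]
    have hx2 : (u x ^ (p/2))^2 = u x ^ p := dkey_rpow_sq (hunonneg x) hp0
    have hy2 : (u y ^ (p/2))^2 = u y ^ p := dkey_rpow_sq (hunonneg y) hp0
    have hsq : (u x ^ (p/2) - u y ^ (p/2))^2 ≤ u x ^ p + u y ^ p := by
      nlinarith [mul_nonneg (hrnn x (p/2)) (hrnn y (p/2)), hx2, hy2]
    have h1 : K (x-y) * (u x ^ (p/2) - u y ^ (p/2))^2 ≤ K (x-y) * (u x ^ p + u y ^ p) :=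
      mul_le_mul_of_nonneg_left hsq hK
    have hbx : K (x-y) * u x ^ p ≤ M^(p-1) * (K (x-y) * u x) := by
      have := mul_le_mul_of_nonneg_left (hpowle x p (by linarith)) hK
      nlinarith [this]
    have hby : K (x-y) * u y ^ p ≤ M^(p-1) * (K (x-y) * u y) := by
      have := mul_le_mul_of_nonneg_left (hpowle y p (by linarith)) hK
      nlinarith [this]
    nlinarith [h1, hbx, hby]
  have hGint : Integrable G μ2 := ((hP1int.sub hP2int).sub hP3int).div_const p
  have hFG : ∀ q : ℝ × ℝ, F q ≤ G q := by
    rintro ⟨x, y⟩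
    simp only [hF, hG, hP1, hP2, hP3]
    have h := dkey p hp (hunonneg x) (hunonneg y)
    have hK := hKnonneg (x - y)
    calc K (x-y) * ((u y - u x) * u x ^ (p-1))
        ≤ K (x-y) * ((u y ^ p - u x ^ p)/p - (u x ^ (p/2) - u y ^ (p/2))^2/p) :=
          mul_le_mul_of_nonneg_left h hK
      _ = (K (x-y) * u y ^ p - K (x-y) * u x ^ p
            - K (x-y) * (u x ^ (p/2) - u y ^ (p/2))^2)/p := by ring
  -- rewrite LHS as iterated integral of F
  have hA : ∀ x : ℝ, ((∫ y : ℝ, K y * u (x - y)) - u x) * u x ^ (p - 1)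
      = ∫ y : ℝ, F (x, y) := by
    intro x
    have hKx : Integrable (fun y : ℝ => K (x - y)) := hKint.comp_sub_left x
    have hKux : Integrable (fun y : ℝ => K (x - y) * u y) := by
      refine (hKx.const_mul M).mono'
        ((hKm.comp (measurable_const.sub measurable_id)).mul hum).aestronglyMeasurable
        (ae_of_all _ fun y => ?_)
      rw [Real.norm_eq_abs, abs_of_nonneg (mul_nonneg (hKnonneg _) (hunonneg _))]
      calc K (x-y) * u y ≤ K (x-y) * M := mul_le_mul_of_nonneg_left (hM y) (hKnonneg _)
        _ = M * K (x - y) := mul_comm _ _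
    have hconv : (∫ y : ℝ, K y * u (x - y)) = ∫ y : ℝ, K (x - y) * u y := by
      have h1 := integral_sub_left_eq_self (fun y : ℝ => K y * u (x - y)) volume x
      simp only [sub_sub_cancel] at h1
      exact h1.symm
    have hmassx : (∫ y : ℝ, K (x - y)) = 1 := by
      rw [integral_sub_left_eq_self K volume x, hKmass]
    have hsplit : (∫ y : ℝ, F (x, y))
        = ∫ y : ℝ, (K (x-y) * u y) * u x ^ (p-1) - K (x-y) * (u x * u x ^ (p-1)) := by
      refine integral_congr_ae (ae_of_all _ fun y => ?_)
      simp only [hF]; ring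
    rw [hsplit, integral_sub (hKux.mul_const _) (hKx.mul_const _),
      integral_mul_const, integral_mul_const, hconv, hmassx]
    ring
  rw [show (∫ x : ℝ, ((∫ y : ℝ, K y * u (x - y)) - u x) * u x ^ (p - 1))
      = ∫ x : ℝ, ∫ y : ℝ, F (x, y) from integral_congr_ae (ae_of_all _ hA)]
  -- compare with G
  have hmono : (∫ x : ℝ, ∫ y : ℝ, F (x, y)) ≤ ∫ x : ℝ, ∫ y : ℝ, G (x, y) := by
    refine integral_mono_ae hFint.integral_prod_left hGint.integral_prod_left ?_
    filter_upwards [hFint.prod_right_ae, hGint.prod_right_ae] with x hFx hGx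
    exact integral_mono hFx hGx fun y => hFG (x, y)
  -- compute the iterated integral of G
  have hGsplit : (∫ x : ℝ, ∫ y : ℝ, G (x, y)) =
      ((∫ x : ℝ, ∫ y : ℝ, P1 (x, y)) - (∫ x : ℝ, ∫ y : ℝ, P2 (x, y))
        - (∫ x : ℝ, ∫ y : ℝ, P3 (x, y))) / p := by
    have h1 : ∀ᵐ x : ℝ, (∫ y : ℝ, G (x, y))
        = ((∫ y : ℝ, P1 (x,y)) - (∫ y : ℝ, P2 (x,y)) - (∫ y : ℝ, P3 (x,y))) / p := by
      filter_upwards [hP1int.prod_right_ae, hP2int.prod_right_ae, hP3int.prod_right_ae]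
        with x h1 h2 h3
      have : (fun y : ℝ => G (x, y))
          = fun y : ℝ => (P1 (x,y) - P2 (x,y) - P3 (x,y)) / p := by
        funext y; simp only [hG]
      rw [this, integral_div]
      have e1 : (∫ y : ℝ, (P1 (x,y) - P2 (x,y) - P3 (x,y)))
          = (∫ y : ℝ, (P1 (x,y) - P2 (x,y))) - ∫ y : ℝ, P3 (x,y) :=
        integral_sub (h1.sub h2) h3
      have e2 : (∫ y : ℝ, (P1 (x,y) - P2 (x,y)))
          = (∫ y : ℝ, P1 (x,y)) - ∫ y : ℝ, P2 (x,y) := integral_sub h1 h2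
      rw [e1, e2]
    rw [integral_congr_ae h1, integral_div]
    have e1 : (∫ x : ℝ, ((∫ y : ℝ, P1 (x,y)) - (∫ y : ℝ, P2 (x,y)) - ∫ y : ℝ, P3 (x,y)))
        = (∫ x : ℝ, ((∫ y : ℝ, P1 (x,y)) - ∫ y : ℝ, P2 (x,y))) - ∫ x : ℝ, ∫ y : ℝ, P3 (x,y) :=
      integral_sub (hP1int.integral_prod_left.sub hP2int.integral_prod_left)
        hP3int.integral_prod_left
    have e2 : (∫ x : ℝ, ((∫ y : ℝ, P1 (x,y)) - ∫ y : ℝ, P2 (x,y)))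
        = (∫ x : ℝ, ∫ y : ℝ, P1 (x,y)) - ∫ x : ℝ, ∫ y : ℝ, P2 (x,y) :=
      integral_sub hP1int.integral_prod_left hP2int.integral_prod_left
    rw [e1, e2]
  have hI1 : (∫ x : ℝ, ∫ y : ℝ, P1 (x, y)) = ∫ t : ℝ, u t ^ p := by
    rw [integral_integral_swap (f := fun x y : ℝ => P1 (x, y)) hP1int]
    refine integral_congr_ae (ae_of_all _ fun y => ?_)
    simp only [hP1]
    rw [integral_mul_const, integral_sub_right_eq_self K y, hKmass, one_mul]
  have hI2 : (∫ x : ℝ, ∫ y : ℝ, P2 (x, y)) = ∫ t : ℝ, u t ^ p := by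
    refine integral_congr_ae (ae_of_all _ fun x => ?_)
    simp only [hP2]
    rw [integral_mul_const, integral_sub_left_eq_self K volume x, hKmass, one_mul]
  -- symmetrization
  set P3' : ℝ × ℝ → ℝ := fun q => K (q.2 - q.1) * (u q.1 ^ (p/2) - u q.2 ^ (p/2)) ^ 2 with hP3'
  have hswapP3 : P3 ∘ Prod.swap = P3' := by
    funext q
    simp only [hP3, hP3', Function.comp_apply, Prod.fst_swap, Prod.snd_swap]
    ring
  have hsw : MeasurePreserving (Prod.swap : ℝ × ℝ → ℝ × ℝ) μ2 μ2 :=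
    Measure.measurePreserving_swap
  have hP3'int : Integrable P3' μ2 := by
    have := (hsw.integrable_comp hP3int.aestronglyMeasurable).mpr hP3int
    rwa [hswapP3] at this
  have hI3' : (∫ x : ℝ, ∫ y : ℝ, P3' (x, y)) = ∫ x : ℝ, ∫ y : ℝ, P3 (x, y) := by
    rw [integral_integral (f := fun x y : ℝ => P3' (x, y)) hP3'int,
      integral_integral (f := fun x y : ℝ => P3 (x, y)) hP3int]
    calc (∫ z : ℝ × ℝ, P3' (z.1, z.2) ∂μ2) = ∫ z : ℝ × ℝ, P3 (Prod.swap z) ∂μ2 := by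
          refine integral_congr_ae (ae_of_all _ fun z => ?_)
          rw [← hswapP3]; rfl
      _ = ∫ z : ℝ × ℝ, P3 (z.1, z.2) ∂μ2 :=
          hsw.integral_comp (MeasurableEquiv.prodComm : ℝ × ℝ ≃ᵐ ℝ × ℝ).measurableEmbedding P3
  have hsym : (∫ x : ℝ, ∫ y : ℝ, ((K (x - y) + K (-(x - y))) / 2) *
        (u x ^ (p / 2) - u y ^ (p / 2)) ^ 2)
      = ∫ x : ℝ, ∫ y : ℝ, P3 (x, y) := by
    have hstep1 : (∫ x : ℝ, ∫ y : ℝ, ((K (x - y) + K (-(x - y))) / 2) *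
          (u x ^ (p / 2) - u y ^ (p / 2)) ^ 2)
        = ∫ x : ℝ, ∫ y : ℝ, (P3 (x,y) + P3' (x,y)) / 2 := by
      refine integral_congr_ae (ae_of_all _ fun x => ?_)
      refine integral_congr_ae (ae_of_all _ fun y => ?_)
      simp only [hP3, hP3', neg_sub]
      ring
    rw [hstep1]
    have h1 : ∀ᵐ x : ℝ, (∫ y : ℝ, (P3 (x,y) + P3' (x,y)) / 2)
        = ((∫ y : ℝ, P3 (x,y)) + (∫ y : ℝ, P3' (x,y))) / 2 := by
      filter_upwards [hP3int.prod_right_ae, hP3'int.prod_right_ae] with x h3 h3'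
      rw [integral_div, integral_add h3 h3']
    rw [integral_congr_ae h1, integral_div,
      integral_add hP3int.integral_prod_left hP3'int.integral_prod_left, hI3']
    ring
  rw [hsym]
  calc (∫ x : ℝ, ∫ y : ℝ, F (x, y)) ≤ ∫ x : ℝ, ∫ y : ℝ, G (x, y) := hmono
    _ = ((∫ t : ℝ, u t ^ p) - (∫ t : ℝ, u t ^ p) - ∫ x : ℝ, ∫ y : ℝ, P3 (x, y)) / p := by
        rw [hGsplit, hI1, hI2]
    _ = -(1 / p) * ∫ x : ℝ, ∫ y : ℝ, P3 (x, y) := by ring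

/-- Dissipation inequality: for an integrable nonnegative kernel `K` of mass one with
symmetrization `J(z) = (K(z)+K(-z))/2`, a real `p ≥ 2` and a nonnegative
`u ∈ L¹(ℝ) ∩ L^∞(ℝ)`:
`∫ (K*u - u) u^{p-1} ≤ -(1/p) ∫∫ J(x-y)(u(x)^{p/2} - u(y)^{p/2})² dx dy`. -/
theorem integral_conv_sub_self_mul_power_le
    (K : ℝ → ℝ) (hKint : Integrable K) (hKnonneg : ∀ z, 0 ≤ K z)
    (hKmass : ∫ z : ℝ, K z = 1)
    (J : ℝ → ℝ) (hJ : ∀ z, J z = (K z + K (-z)) / 2)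
    (p : ℝ) (hp : 2 ≤ p)
    (u : ℝ → ℝ) (hum : Measurable u) (hunonneg : ∀ x, 0 ≤ u x)
    (hu1 : Integrable u) (huinf : MemLp u ⊤ (volume : Measure ℝ)) :
    (∫ x : ℝ, ((∫ y : ℝ, K y * u (x - y)) - u x) * u x ^ (p - 1))
      ≤ -(1 / p) * ∫ x : ℝ, ∫ y : ℝ, J (x - y) * (u x ^ (p / 2) - u y ^ (p / 2)) ^ 2 := by
  classical
  -- measurable, everywhere-nonnegative representative of K
  obtain ⟨K₀, hK₀m, hK₀ae⟩ := hKint.aestronglyMeasurable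
  set K₁ : ℝ → ℝ := fun z => max (K₀ z) 0 with hK₁
  have hK₁m : Measurable K₁ := hK₀m.measurable.max measurable_const
  have hKae : K =ᵐ[volume] K₁ := by
    filter_upwards [hK₀ae] with z hz
    rw [hK₁]
    simp only
    rw [← hz, max_eq_left (hKnonneg z)]
  have hK₁int : Integrable K₁ := hKint.congr hKae
  have hK₁nonneg : ∀ z, 0 ≤ K₁ z := fun z => le_max_right _ _
  have hK₁mass : (∫ z : ℝ, K₁ z) = 1 := by
    rw [← integral_congr_ae hKae]; exact hKmass
  -- everywhere-bounded representative of u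
  have hufin : eLpNormEssSup u volume ≠ ⊤ := by
    have h := huinf.2
    rw [eLpNorm_exponent_top] at h
    exact h.ne
  set M : ℝ := (eLpNormEssSup u volume).toReal with hMdef
  have huM : ∀ᵐ x : ℝ ∂volume, u x ≤ M := by
    filter_upwards [ae_le_eLpNormEssSup (f := u) (μ := volume)] with x hx
    have h2 : ((‖u x‖₊ : ℝ≥0∞)).toReal ≤ M := ENNReal.toReal_mono hufin hx
    have h3 : ‖u x‖ ≤ M := by simpa using h2
    calc u x ≤ |u x| := le_abs_self _
      _ = ‖u x‖ := (Real.norm_eq_abs _).symm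
      _ ≤ M := h3
  have hM0 : (0:ℝ) ≤ M := ENNReal.toReal_nonneg
  set v : ℝ → ℝ := fun x => min (u x) M with hv
  have hvm : Measurable v := hum.min measurable_const
  have hvu : u =ᵐ[volume] v := by
    filter_upwards [huM] with x hx
    rw [hv]; simp only; rw [min_eq_left hx]
  have hvnonneg : ∀ x, 0 ≤ v x := fun x => le_min (hunonneg x) hM0
  have hvM : ∀ x, v x ≤ M := fun x => min_le_right _ _
  have hv1 : Integrable v := hu1.congr hvu
  -- transfer both sides
  have hEL : (∫ x : ℝ, ((∫ y : ℝ, K y * u (x - y)) - u x) * u x ^ (p - 1))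
      = ∫ x : ℝ, ((∫ y : ℝ, K₁ y * v (x - y)) - v x) * v x ^ (p - 1) := by
    have hinner : ∀ x : ℝ, (∫ y : ℝ, K y * u (x - y)) = ∫ y : ℝ, K₁ y * v (x - y) := by
      intro x
      have h1 : (fun y : ℝ => u (x - y)) =ᵐ[volume] fun y : ℝ => v (x - y) := by
        have := (Measure.measurePreserving_sub_left volume x).quasiMeasurePreserving.ae_eq_comp hvu
        simpa [Function.comp_def] using this
      refine integral_congr_ae ?_
      filter_upwards [hKae, h1] with y h2 h3
      rw [h2, h3]
    refine integral_congr_ae ?_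
    filter_upwards [hvu] with x hx
    rw [hinner x, hx]
  have hER : (∫ x : ℝ, ∫ y : ℝ, J (x - y) * (u x ^ (p / 2) - u y ^ (p / 2)) ^ 2)
      = ∫ x : ℝ, ∫ y : ℝ, ((K₁ (x - y) + K₁ (-(x - y))) / 2) *
          (v x ^ (p / 2) - v y ^ (p / 2)) ^ 2 := by
    refine integral_congr_ae ?_
    filter_upwards [hvu] with x hx
    refine integral_congr_ae ?_
    have hxk : (fun y : ℝ => K (x - y)) =ᵐ[volume] fun y : ℝ => K₁ (x - y) := by
      have := (Measure.measurePreserving_sub_left volume x).quasiMeasurePreserving.ae_eq_comp hKae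
      simpa [Function.comp_def] using this
    have hxk' : (fun y : ℝ => K (y - x)) =ᵐ[volume] fun y : ℝ => K₁ (y - x) := by
      have := (measurePreserving_sub_right volume x).quasiMeasurePreserving.ae_eq_comp hKae
      simpa [Function.comp_def] using this
    filter_upwards [hxk, hxk', hvu] with y h1 h2 h3
    rw [hJ, neg_sub, h1, h2, hx, h3]
  rw [hEL, hER]
  exact aux_main K₁ hK₁m hK₁int hK₁nonneg hK₁mass p hp v hvm hvnonneg hv1 M hvM
end

section
/- Let K(z) = e^{-z} for z > 0 and K(z) = 0 for z ≤ 0, and for λ > 0 set K_λ(z) = λK(λz) and K̃_λ(z) = K_λ(−z). Let φ : ℝ → ℝ be three times differentiable with bounded third derivative. Then for every λ > 0 and every x ∈ ℝ: |λ²((K̃_λ*φ)(x) − φ(x)) − λφ'(x) − φ''(x)| ≤ (1/λ) · sup_{y∈ℝ} |φ'''(y)|. -/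
open MeasureTheory Set Real
set_option maxHeartbeats 1000000
-- generic polynomial bound lemma
lemma poly_bound (f : ℝ → ℝ) (hf : Differentiable ℝ f) (C : ℝ) (k : ℕ) (h0 : f 0 = 0)
    (hb : ∀ t : ℝ, 0 ≤ t → |deriv f t| ≤ C * t ^ k) :
    ∀ t : ℝ, 0 ≤ t → |f t| ≤ C * t ^ (k + 1) / (k + 1) := by
  have key : ∀ s : ℝ, (∀ t, 0 ≤ t → s * deriv f t ≤ C * t ^ k) →
      ∀ t : ℝ, 0 ≤ t → s * f t ≤ C * t ^ (k + 1) / (k + 1) := by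
    intro s hs t ht
    set g : ℝ → ℝ := fun t => C * t ^ (k + 1) / (k + 1) - s * f t with hg
    have hgd : Differentiable ℝ g := by
      apply Differentiable.sub
      · exact (differentiable_const _ |>.mul (differentiable_pow _)).div_const _
      · exact hf.const_mul s
    have hmono : MonotoneOn g (Ici (0:ℝ)) := by
      apply monotoneOn_of_deriv_nonneg (convex_Ici 0) hgd.continuous.continuousOn
        hgd.differentiableOn
      intro u hu
      rw [interior_Ici] at hu
      have : deriv g u = C * u ^ k - s * deriv f u := by
        rw [hg]
        rw [deriv_fun_sub (((differentiable_const _ |>.mul (differentiable_pow _)).div_const _ u :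
          DifferentiableAt ℝ (fun t : ℝ => C * t ^ (k + 1) / (k + 1)) u))
          ((hf.const_mul s) u)]
        rw [deriv_div_const, deriv_const_mul _ (differentiable_pow _ u),
          deriv_const_mul _ (hf u), deriv_pow_field, Nat.add_sub_cancel, Nat.cast_add_one]
        field_simp
      rw [this, sub_nonneg]
      exact hs u (le_of_lt hu)
    have := hmono (self_mem_Ici) (mem_Ici.2 ht) ht
    simp only [hg, h0, mul_zero, zero_pow (Nat.succ_ne_zero k), mul_zero, zero_div, sub_zero] at this
    linarith [this]
  intro t ht
  rw [abs_le]
  constructor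
  · have := key (-1) (fun u hu => by
      have := hb u hu
      have h1 : -deriv f u ≤ |deriv f u| := neg_le_abs _
      nlinarith [abs_nonneg (deriv f u)]) t ht
    linarith
  · have := key 1 (fun u hu => by
      have h1 : deriv f u ≤ |deriv f u| := le_abs_self _
      linarith [hb u hu]) t ht
    linarith

lemma exp_moment (r : ℝ) (hr : 0 < r) (n : ℕ) :
    ∫ t : ℝ in Ioi 0, t ^ n * Real.exp (-(r * t)) = n.factorial / r ^ (n + 1) := by
  have h := integral_rpow_mul_exp_neg_mul_Ioi (a := (n : ℝ) + 1) (r := r) (by positivity) hr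
  rw [show ((n : ℝ) + 1 - 1) = (n : ℝ) by ring] at h
  have : ∫ t : ℝ in Ioi 0, t ^ n * Real.exp (-(r * t))
      = ∫ t : ℝ in Ioi 0, t ^ (n : ℝ) * Real.exp (-(r * t)) := by
    refine setIntegral_congr_fun measurableSet_Ioi (fun t ht => ?_)
    rw [Real.rpow_natCast]
  rw [this, h, Real.Gamma_nat_eq_factorial]
  rw [one_div, Real.inv_rpow hr.le, ← Real.rpow_natCast r (n+1)]
  push_cast
  rw [div_eq_inv_mul, mul_comm]

lemma exp_moment_integrable (r : ℝ) (hr : 0 < r) (n : ℕ) :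
    IntegrableOn (fun t : ℝ => t ^ n * Real.exp (-(r * t))) (Ioi 0) := by
  have h := integrableOn_rpow_mul_exp_neg_mul_rpow (s := (n : ℝ)) (p := 1) (b := r)
    (by exact_mod_cast neg_one_lt_zero.trans_le (Nat.cast_nonneg n)) one_pos hr
  simp only [Real.rpow_one] at h
  refine h.congr_fun (fun t ht => ?_) measurableSet_Ioi
  beta_reduce
  rw [Real.rpow_natCast, neg_mul]

/-- For the reflected rescaled kernel `K̃_λ(z) = K_λ(-z)` of `K(z) = e^{-z} 1_{z>0}` and a
three times differentiable `φ` with bounded third derivative,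
`|λ²((K̃_λ*φ)(x) - φ(x)) - λφ'(x) - φ''(x)| ≤ (1/λ) sup_y |φ'''(y)|`
for all `λ > 0` and `x ∈ ℝ`. -/
theorem abs_reflected_rescaled_nonlocal_operator_le_sup_third_deriv
    (K : ℝ → ℝ) (hK : ∀ z : ℝ, K z = if 0 < z then Real.exp (-z) else 0)
    (Kl : ℝ → ℝ → ℝ) (hKl : ∀ lam z : ℝ, Kl lam z = lam * K (lam * z))
    (Klt : ℝ → ℝ → ℝ) (hKlt : ∀ lam z : ℝ, Klt lam z = Kl lam (-z))
    (φ : ℝ → ℝ) (hφ : Differentiable ℝ φ) (hφ' : Differentiable ℝ (deriv φ))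
    (hφ'' : Differentiable ℝ (deriv (deriv φ)))
    (hbdd : BddAbove (Set.range fun y : ℝ => |deriv (deriv (deriv φ)) y|))
    (lam : ℝ) (hlam : 0 < lam) (x : ℝ) :
    |lam ^ 2 * ((∫ y : ℝ, Klt lam y * φ (x - y)) - φ x) - lam * deriv φ x
        - deriv (deriv φ) x|
      ≤ (1 / lam) * ⨆ y : ℝ, |deriv (deriv (deriv φ)) y| := by
  set M : ℝ := ⨆ y : ℝ, |deriv (deriv (deriv φ)) y| with hMdef
  have hM : ∀ y : ℝ, |deriv (deriv (deriv φ)) y| ≤ M :=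
    fun y => le_ciSup hbdd y
  have hM0 : 0 ≤ M := le_trans (abs_nonneg _) (hM 0)
  -- Taylor remainder
  set f2 : ℝ → ℝ := fun t => deriv (deriv φ) (x + t) - deriv (deriv φ) x with hf2def
  set f1 : ℝ → ℝ := fun t => deriv φ (x + t) - deriv φ x - t * deriv (deriv φ) x with hf1def
  set f0 : ℝ → ℝ := fun t => φ (x + t) - φ x - t * deriv φ x - t ^ 2 / 2 * deriv (deriv φ) x
    with hf0def
  have hcomp : ∀ (g : ℝ → ℝ), Differentiable ℝ g → ∀ t : ℝ,
      HasDerivAt (fun t => g (x + t)) (deriv g (x + t)) t := by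
    intro g hg t
    simpa [Function.comp_def] using (hg (x + t)).hasDerivAt.comp t ((hasDerivAt_id t).const_add x)
  have hd2 : ∀ t : ℝ, HasDerivAt f2 (deriv (deriv (deriv φ)) (x + t)) t := by
    intro t
    exact (hcomp _ hφ'' t).sub_const (deriv (deriv φ) x)
  have hd1 : ∀ t : ℝ, HasDerivAt f1 (f2 t) t := by
    intro t
    have := ((hcomp _ hφ' t).sub_const (deriv φ x)).sub
      (hasDerivAt_mul_const (deriv (deriv φ) x) (x := t))
    simpa [hf1def, hf2def, Pi.sub_def] using this
  have hd0 : ∀ t : ℝ, HasDerivAt f0 (f1 t) t := by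
    intro t
    have h1 : HasDerivAt (fun t : ℝ => t ^ 2 / 2 * deriv (deriv φ) x)
        (t * deriv (deriv φ) x) t := by
      have := ((hasDerivAt_pow 2 t).div_const 2).mul_const (deriv (deriv φ) x)
      refine this.congr_deriv ?_
      ring
    have := (((hcomp _ hφ t).sub_const (φ x)).sub
      (hasDerivAt_mul_const (deriv φ x) (x := t))).sub h1
    simpa [hf0def, hf1def, Pi.sub_def] using this
  have hdiff2 : Differentiable ℝ f2 := fun t => (hd2 t).differentiableAt
  have hdiff1 : Differentiable ℝ f1 := fun t => (hd1 t).differentiableAt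
  have hdiff0 : Differentiable ℝ f0 := fun t => (hd0 t).differentiableAt
  have hb2 : ∀ t : ℝ, 0 ≤ t → |f2 t| ≤ M * t ^ 1 := by
    have := poly_bound f2 hdiff2 M 0 (by simp [hf2def])
      (fun t _ => by rw [(hd2 t).deriv]; simpa using hM (x + t))
    intro t ht
    simpa using this t ht
  have hb1 : ∀ t : ℝ, 0 ≤ t → |f1 t| ≤ M / 2 * t ^ 2 := by
    have := poly_bound f1 hdiff1 M 1 (by simp [hf1def])
      (fun t ht => by rw [(hd1 t).deriv]; exact hb2 t ht)
    intro t ht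
    have h := this t ht
    norm_num at h
    linarith
  have hb0 : ∀ t : ℝ, 0 ≤ t → |f0 t| ≤ M / 6 * t ^ 3 := by
    have := poly_bound f0 hdiff0 (M / 2) 2 (by simp [hf0def])
      (fun t ht => by rw [(hd0 t).deriv]; exact hb1 t ht)
    intro t ht
    have h := this t ht
    norm_num at h
    linarith
  -- rewrite the integral
  have hIeq : (∫ y : ℝ, Klt lam y * φ (x - y))
      = ∫ t : ℝ in Ioi 0, lam * Real.exp (-(lam * t)) * φ (x + t) := by
    have h1 : (fun y : ℝ => Klt lam y * φ (x - y))
        = (Iio (0:ℝ)).indicator (fun y => lam * Real.exp (lam * y) * φ (x - y)) := by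
      funext y
      rw [hKlt, hKl, hK]
      by_cases hy : y < 0
      · have : 0 < lam * -y := mul_pos hlam (by linarith)
        rw [if_pos this, Set.indicator_of_mem (by exact hy)]
        ring_nf
      · have : ¬ 0 < lam * -y := by
          intro h
          exact hy (by nlinarith)
        rw [if_neg this, Set.indicator_of_notMem (by simpa using hy)]
        ring
    rw [h1, integral_indicator measurableSet_Iio]
    have h2 : (∫ y in Iio (0:ℝ), lam * Real.exp (lam * y) * φ (x - y))
        = ∫ y in Iic (0:ℝ), lam * Real.exp (lam * y) * φ (x - y) := by
      rw [← integral_Iic_eq_integral_Iio]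
    rw [h2]
    have h3 := integral_comp_neg_Iic (0:ℝ) (fun t => lam * Real.exp (-(lam * t)) * φ (x + t))
    rw [neg_zero] at h3
    rw [← h3]
    refine setIntegral_congr_fun measurableSet_Iic (fun y _ => ?_)
    show lam * Real.exp (lam * y) * φ (x - y) = lam * Real.exp (-(lam * -y)) * φ (x + -y)
    rw [show -(lam * -y) = lam * y by ring, show x + -y = x - y by ring]
  set R : ℝ := ∫ t : ℝ in Ioi 0, Real.exp (-(lam * t)) * f0 t with hRdef
  have hcont0 : Continuous f0 := hdiff0.continuous
  have hf0int : IntegrableOn (fun t : ℝ => Real.exp (-(lam * t)) * f0 t) (Ioi 0) := by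
    apply Integrable.mono' ((exp_moment_integrable lam hlam 3).const_mul (M / 6))
    · exact ((Real.continuous_exp.comp (by continuity)).mul hcont0).aestronglyMeasurable
    · filter_upwards [self_mem_ae_restrict measurableSet_Ioi] with t ht
      have ht' : (0:ℝ) ≤ t := (le_of_lt ht)
      have := hb0 t ht'
      rw [Real.norm_eq_abs, abs_mul, abs_of_pos (Real.exp_pos _)]
      calc Real.exp (-(lam * t)) * |f0 t| ≤ Real.exp (-(lam * t)) * (M / 6 * t ^ 3) := by
            exact mul_le_mul_of_nonneg_left this (Real.exp_pos _).le
        _ = M / 6 * (t ^ 3 * Real.exp (-(lam * t))) := by ring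
  have hInt : (∫ t : ℝ in Ioi 0, lam * Real.exp (-(lam * t)) * φ (x + t))
      = φ x + deriv φ x * (1 / lam) + deriv (deriv φ) x * (1 / lam ^ 2) + lam * R := by
    have hsplit : ∀ t : ℝ, t ∈ Ioi (0:ℝ) → lam * Real.exp (-(lam * t)) * φ (x + t)
        = φ x * (lam * (t ^ 0 * Real.exp (-(lam * t))))
          + deriv φ x * (lam * (t ^ 1 * Real.exp (-(lam * t))))
          + deriv (deriv φ) x / 2 * (lam * (t ^ 2 * Real.exp (-(lam * t))))
          + lam * (Real.exp (-(lam * t)) * f0 t) := by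
      intro t _
      simp only [hf0def]
      ring
    rw [setIntegral_congr_fun measurableSet_Ioi hsplit]
    have i0 := ((exp_moment_integrable lam hlam 0).const_mul lam).const_mul (φ x)
    have i1 := ((exp_moment_integrable lam hlam 1).const_mul lam).const_mul (deriv φ x)
    have i2 := ((exp_moment_integrable lam hlam 2).const_mul lam).const_mul
      (deriv (deriv φ) x / 2)
    have i3 := hf0int.const_mul lam
    have e1 := integral_add (μ := volume.restrict (Ioi 0)) ((i0.add i1).add i2) i3
    have e2 := integral_add (μ := volume.restrict (Ioi 0)) (i0.add i1) i2
    have e3 := integral_add (μ := volume.restrict (Ioi 0)) i0 i1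
    simp only [Pi.add_apply] at e1 e2 e3
    rw [e1, e2, e3]
    simp only [integral_const_mul, exp_moment lam hlam, Nat.factorial]
    push_cast
    field_simp
    ring
  have hkey : lam ^ 2 * ((∫ y : ℝ, Klt lam y * φ (x - y)) - φ x) - lam * deriv φ x
      - deriv (deriv φ) x = lam ^ 3 * R := by
    rw [hIeq, hInt]
    field_simp
    ring
  rw [hkey]
  have hRbound : |R| ≤ M / 6 * (6 / lam ^ 4) := by
    have habs : IntegrableOn (fun t : ℝ => Real.exp (-(lam * t)) * |f0 t|) (Ioi 0) := by
      simpa [abs_mul, Real.abs_exp, IntegrableOn] using hf0int.abs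
    calc |R| ≤ ∫ t : ℝ in Ioi 0, Real.exp (-(lam * t)) * |f0 t| := by
          simpa [Real.norm_eq_abs, abs_mul, Real.abs_exp] using norm_integral_le_integral_norm
            (μ := volume.restrict (Ioi 0)) (fun t => Real.exp (-(lam * t)) * f0 t)
      _ ≤ ∫ t : ℝ in Ioi 0, M / 6 * (t ^ 3 * Real.exp (-(lam * t))) := by
          refine setIntegral_mono_on habs
            ((exp_moment_integrable lam hlam 3).const_mul (M / 6)) measurableSet_Ioi ?_
          intro t ht
          calc Real.exp (-(lam * t)) * |f0 t|
              ≤ Real.exp (-(lam * t)) * (M / 6 * t ^ 3) :=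
                mul_le_mul_of_nonneg_left (hb0 t ht.le) (Real.exp_pos _).le
            _ = M / 6 * (t ^ 3 * Real.exp (-(lam * t))) := by ring
      _ = M / 6 * (6 / lam ^ 4) := by
          rw [integral_const_mul, exp_moment lam hlam 3]
          norm_num [Nat.factorial]
  calc |lam ^ 3 * R| = lam ^ 3 * |R| := by
        rw [abs_mul, abs_of_pos (by positivity : (0:ℝ) < lam ^ 3)]
    _ ≤ lam ^ 3 * (M / 6 * (6 / lam ^ 4)) :=
        mul_le_mul_of_nonneg_left hRbound (by positivity)
    _ = (1 / lam) * M := by field_simp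
end

section
/- Let K : ℝ → [0,∞) be integrable with ∫_ℝ K(z) dz = 1, and let w ∈ L¹(ℝ) be real-valued. Then ∫_ℝ ((K*w)(x) − w(x)) · sgn(w(x)) dx ≤ 0, where sgn(s) = 1 for s > 0, sgn(s) = −1 for s < 0, and sgn(0) = 0. -/
open MeasureTheory Convolution

lemma measurable_real_sign : Measurable Real.sign := by
  have h : Real.sign = fun r : ℝ => if r < 0 then (-1 : ℝ) else if 0 < r then 1 else 0 :=
    funext fun r => rfl
  rw [h]
  exact Measurable.ite measurableSet_Iio measurable_const
    (Measurable.ite measurableSet_Ioi measurable_const measurable_const)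

lemma abs_real_sign_le (r : ℝ) : |Real.sign r| ≤ 1 := by
  rcases Real.sign_apply_eq r with h | h | h <;> rw [h] <;> norm_num

lemma self_mul_real_sign (r : ℝ) : r * Real.sign r = |r| := by
  rcases lt_trichotomy r 0 with h | h | h
  · rw [Real.sign_of_neg h, abs_of_neg h]; ring
  · simp [h]
  · rw [Real.sign_of_pos h, abs_of_pos h]; ring

/-- For an integrable nonnegative kernel `K` of mass one and real `w ∈ L¹(ℝ)`,
`∫ (K*w - w) sgn(w) ≤ 0`, where `sgn` is the usual sign function. -/
theorem integral_conv_sub_self_mul_sign_nonpos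
    (K : ℝ → ℝ) (hKint : Integrable K) (hKnonneg : ∀ z, 0 ≤ K z)
    (hKmass : ∫ z : ℝ, K z = 1)
    (w : ℝ → ℝ) (hw : Integrable w) :
    ∫ x : ℝ, ((∫ y : ℝ, K y * w (x - y)) - w x) * Real.sign (w x) ≤ 0 := by
  set L := ContinuousLinearMap.mul ℝ ℝ with hL
  have habs : Integrable (fun x => |w x|) := hw.abs
  have hC : Integrable (K ⋆[L] w) := hKint.integrable_convolution L hw
  have hCabs : Integrable (K ⋆[L] fun x => |w x|) :=
    hKint.integrable_convolution L habs
  have hconv_eq : ∀ x : ℝ, (K ⋆[L] w) x = ∫ y : ℝ, K y * w (x - y) := fun x => rfl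
  -- integrability of the integrand
  have hsign_meas : AEStronglyMeasurable (fun x => Real.sign (w x)) volume :=
    (measurable_real_sign.comp_aemeasurable hw.aemeasurable).aestronglyMeasurable
  have hF : Integrable (fun x => ((∫ y : ℝ, K y * w (x - y)) - w x) * Real.sign (w x)) := by
    have := ((hC.sub hw).bdd_mul (c := 1) hsign_meas
      (Filter.Eventually.of_forall fun x => by simpa using abs_real_sign_le (w x)))
    refine this.congr (Filter.Eventually.of_forall fun x => ?_)
    simp only [hconv_eq, Pi.sub_apply]
    ring
  have hle : ∀ x : ℝ, ((∫ y : ℝ, K y * w (x - y)) - w x) * Real.sign (w x)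
      ≤ (K ⋆[L] fun x => |w x|) x - |w x| := by
    intro x
    have h1 : ((∫ y : ℝ, K y * w (x - y)) - w x) * Real.sign (w x)
        = (∫ y : ℝ, K y * w (x - y)) * Real.sign (w x) - |w x| := by
      rw [sub_mul, self_mul_real_sign]
    rw [h1]
    have h2 : (∫ y : ℝ, K y * w (x - y)) * Real.sign (w x)
        ≤ |∫ y : ℝ, K y * w (x - y)| := by
      calc (∫ y : ℝ, K y * w (x - y)) * Real.sign (w x)
          ≤ |(∫ y : ℝ, K y * w (x - y)) * Real.sign (w x)| := le_abs_self _
        _ = |∫ y : ℝ, K y * w (x - y)| * |Real.sign (w x)| := abs_mul _ _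
        _ ≤ |∫ y : ℝ, K y * w (x - y)| * 1 :=
            mul_le_mul_of_nonneg_left (abs_real_sign_le _) (abs_nonneg _)
        _ = |∫ y : ℝ, K y * w (x - y)| := mul_one _
    have h3 : |∫ y : ℝ, K y * w (x - y)| ≤ (K ⋆[L] fun x => |w x|) x := by
      calc |∫ y : ℝ, K y * w (x - y)| ≤ ∫ y : ℝ, ‖K y * w (x - y)‖ := by
            simpa using norm_integral_le_integral_norm (fun y => K y * w (x - y))
        _ = ∫ y : ℝ, K y * |w (x - y)| := by
            refine integral_congr_ae (Filter.Eventually.of_forall fun y => ?_)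
            show ‖K y * w (x - y)‖ = K y * |w (x - y)|
            rw [norm_mul, Real.norm_eq_abs, Real.norm_eq_abs, abs_of_nonneg (hKnonneg y)]
        _ = (K ⋆[L] fun x => |w x|) x := rfl
    linarith
  calc ∫ x : ℝ, ((∫ y : ℝ, K y * w (x - y)) - w x) * Real.sign (w x)
      ≤ ∫ x : ℝ, ((K ⋆[L] fun x => |w x|) x - |w x|) :=
        integral_mono hF (hCabs.sub habs) hle
    _ = (∫ x : ℝ, (K ⋆[L] fun x => |w x|) x) - ∫ x : ℝ, |w x| :=
        integral_sub hCabs habs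
    _ = 0 := by
        rw [integral_convolution L hKint habs, hKmass]
        simp [L]
end

section
/- Let K : ℝ → [0,∞) be integrable with ∫_ℝ K(z) dz = 1, and let w ∈ L¹(ℝ) be real-valued. Then ∫_ℝ ((K*w)(x) − w(x)) · sgn⁺(w(x)) dx ≤ 0, where sgn⁺(s) = 1 for s > 0 and sgn⁺(s) = 0 for s ≤ 0. -/
open MeasureTheory Convolution

/-- For an integrable nonnegative kernel `K` of mass one and real `w ∈ L¹(ℝ)`,
`∫ (K*w - w) sgn⁺(w) ≤ 0`, where `sgn⁺(s) = 1` for `s > 0` and `sgn⁺(s) = 0` for `s ≤ 0`. -/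
theorem integral_conv_sub_self_mul_sign_pos_nonpos
    (K : ℝ → ℝ) (hKint : Integrable K) (hKnonneg : ∀ z, 0 ≤ K z)
    (hKmass : ∫ z : ℝ, K z = 1)
    (w : ℝ → ℝ) (hw : Integrable w) :
    ∫ x : ℝ, ((∫ y : ℝ, K y * w (x - y)) - w x)
        * (if 0 < w x then (1 : ℝ) else 0) ≤ 0 := by
  classical
  set L : ℝ →L[ℝ] ℝ →L[ℝ] ℝ := ContinuousLinearMap.mul ℝ ℝ with hL
  set wp : ℝ → ℝ := fun x => max (w x) 0 with hwp
  have hwp_int : Integrable wp := hw.pos_part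
  -- convolution integrability
  have hconvw : Integrable (K ⋆[L] w) := hKint.integrable_convolution L hw
  have hconvwp : Integrable (K ⋆[L] wp) := hKint.integrable_convolution L hwp_int
  have hconv_eq : ∀ x : ℝ, (∫ y : ℝ, K y * w (x - y)) = (K ⋆[L] w) x := by
    intro x; simp [convolution_def, hL]
  -- measurability of the sign factor
  have hsgn_meas : AEStronglyMeasurable (fun x : ℝ => if 0 < w x then (1 : ℝ) else 0)
      (volume : Measure ℝ) := by
    have hw' := hw.aestronglyMeasurable
    refine (AEStronglyMeasurable.congr
      (f := fun x : ℝ => if 0 < hw'.mk w x then (1 : ℝ) else 0) ?_ ?_)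
    · exact (stronglyMeasurable_const.ite
        (measurableSet_lt measurable_const hw'.measurable_mk)
        stronglyMeasurable_const).aestronglyMeasurable
    · filter_upwards [hw'.ae_eq_mk] with x hx
      simp [hx]
  -- integrability of the left-hand side integrand
  have hFint : Integrable (fun x : ℝ =>
      ((∫ y : ℝ, K y * w (x - y)) - w x) * (if 0 < w x then (1 : ℝ) else 0)) := by
    have h1 : Integrable (fun x : ℝ => (if 0 < w x then (1 : ℝ) else 0) *
        ((K ⋆[L] w) x - w x)) :=
      (hconvw.sub hw).bdd_mul (c := 1) hsgn_meas (Filter.Eventually.of_forall fun x => by split <;> simp)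
    refine h1.congr (Filter.Eventually.of_forall fun x => ?_)
    dsimp only
    rw [hconv_eq x, mul_comm]
  -- integrability of the majorant
  have hGint : Integrable (fun x : ℝ => (K ⋆[L] wp) x - wp x) := hconvwp.sub hwp_int
  -- pointwise a.e. comparison
  have hle : ∀ᵐ x : ℝ,
      ((∫ y : ℝ, K y * w (x - y)) - w x) * (if 0 < w x then (1 : ℝ) else 0)
        ≤ (K ⋆[L] wp) x - wp x := by
    filter_upwards [hKint.ae_convolution_exists L hw, hKint.ae_convolution_exists L hwp_int]
      with x hex hexp
    have hpt : ∀ y : ℝ, K y * w (x - y) ≤ K y * wp (x - y) := fun y =>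
      mul_le_mul_of_nonneg_left (le_max_left _ _) (hKnonneg y)
    have hconvle : (K ⋆[L] w) x ≤ (K ⋆[L] wp) x := by
      simp only [convolution_def, hL, ContinuousLinearMap.mul_apply']
      exact integral_mono hex hexp hpt
    by_cases h : 0 < w x
    · have hwpx : wp x = w x := max_eq_left h.le
      rw [hconv_eq x]
      simp only [h, if_pos, mul_one, hwpx]
      exact sub_le_sub_right hconvle _
    · have hwpx : wp x = 0 := max_eq_right (not_lt.mp h)
      simp only [h, if_neg, not_false_iff, mul_zero, hwpx, sub_zero]
      have : (0 : ℝ) ≤ (K ⋆[L] wp) x := by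
        simp only [convolution_def, hL, ContinuousLinearMap.mul_apply']
        exact integral_nonneg fun y => mul_nonneg (hKnonneg y) (le_max_right _ _)
      exact this
  -- conclude
  have hmain : ∫ x : ℝ, ((∫ y : ℝ, K y * w (x - y)) - w x)
      * (if 0 < w x then (1 : ℝ) else 0) ≤ ∫ x : ℝ, ((K ⋆[L] wp) x - wp x) :=
    integral_mono_ae hFint hGint hle
  have hzero : ∫ x : ℝ, ((K ⋆[L] wp) x - wp x) = 0 := by
    rw [integral_sub hconvwp hwp_int, integral_convolution L hKint hwp_int]
    simp [hL, hKmass]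
  linarith
end

section
/- Let K(z) = e^{-z} for z > 0 and K(z) = 0 for z ≤ 0. Let T > 0 and let u : [0,T] × ℝ → ℝ be a classical solution of the augmented Burgers equation ∂_t u = ∂_x(u²/2) + ∂_{xx} u + K*u − u + ∂_x u on [0,T] × ℝ, where u is continuous, the derivatives ∂_t u, ∂_x u, ∂_{xx} u exist and are continuous, and there is a constant C such that |u(t,x)| + |∂_t u(t,x)| + |∂_x u(t,x)| + |∂_{xx} u(t,x)| ≤ C/(1 + x²) for all (t,x) ∈ [0,T] × ℝ. Then for every t ∈ [0,T]: ‖u(t,·)‖_{L²(ℝ)} ≤ ‖u(0,·)‖_{L²(ℝ)}. -/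
open MeasureTheory Real Set Filter
open scoped ENNReal NNReal

lemma aux_integrable_of_decay {f : ℝ → ℝ} (hf : AEStronglyMeasurable f volume) {c : ℝ}
    (h : ∀ x, |f x| ≤ c / (1 + x ^ 2)) : Integrable f := by
  refine ((integrable_inv_one_add_sq.const_mul c)).mono' hf ?_
  filter_upwards with x
  rw [Real.norm_eq_abs]
  simpa [div_eq_mul_inv] using h x

lemma aux_tendsto_atTop {f : ℝ → ℝ} {c : ℝ} (h : ∀ x, |f x| ≤ c / (1 + x ^ 2)) :
    Tendsto f atTop (nhds 0) := by
  have hb : Tendsto (fun x : ℝ => c / (1 + x ^ 2)) atTop (nhds 0) :=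
    Tendsto.div_atTop tendsto_const_nhds
      (tendsto_atTop_add_const_left _ 1 (tendsto_pow_atTop (by norm_num)))
  exact squeeze_zero_norm (fun x => by rw [Real.norm_eq_abs]; exact h x) hb

lemma aux_tendsto_atBot {f : ℝ → ℝ} {c : ℝ} (h : ∀ x, |f x| ≤ c / (1 + x ^ 2)) :
    Tendsto f atBot (nhds 0) := by
  have h2 : Tendsto (fun x : ℝ => x ^ 2) atBot atTop := by
    have := (tendsto_pow_atTop (α := ℝ) (n := 2) (by norm_num)).comp tendsto_neg_atBot_atTop
    simpa [Function.comp_def] using this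
  have hb : Tendsto (fun x : ℝ => c / (1 + x ^ 2)) atBot (nhds 0) :=
    Tendsto.div_atTop tendsto_const_nhds (tendsto_atTop_add_const_left _ 1 h2)
  exact squeeze_zero_norm (fun x => by rw [Real.norm_eq_abs]; exact h x) hb

lemma aux_integral_deriv_eq_zero {g g' : ℝ → ℝ}
    (hd : ∀ x : ℝ, HasDerivAt g (g' x) x) (hint : Integrable g')
    {c : ℝ} (hg : ∀ x, |g x| ≤ c / (1 + x ^ 2)) :
    ∫ x, g' x = 0 := by
  have h1 : ∫ x in Iic (0:ℝ), g' x = g 0 - 0 :=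
    integral_Iic_of_hasDerivAt_of_tendsto' (fun x _ => hd x) hint.integrableOn
      (aux_tendsto_atBot hg)
  have h2 : ∫ x in Ioi (0:ℝ), g' x = 0 - g 0 :=
    integral_Ioi_of_hasDerivAt_of_tendsto' (fun x _ => hd x) hint.integrableOn
      (aux_tendsto_atTop hg)
  have h3 := intervalIntegral.integral_Iic_add_Ioi (b := (0:ℝ)) hint.integrableOn hint.integrableOn
  rw [h1, h2] at h3
  linarith [h3.symm]

section Conv

variable {K f : ℝ → ℝ} {c : ℝ}

lemma aux_K_eq (hK : ∀ z : ℝ, K z = if 0 < z then Real.exp (-z) else 0) :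
    K = Set.indicator (Ioi (0:ℝ)) (fun z => Real.exp (-z)) := by
  funext z
  rw [hK]
  simp [Set.indicator, mem_Ioi]

lemma aux_K_meas (hK : ∀ z : ℝ, K z = if 0 < z then Real.exp (-z) else 0) :
    Measurable K := by
  rw [aux_K_eq hK]
  exact (Real.measurable_exp.comp measurable_neg).indicator measurableSet_Ioi

lemma aux_K_nonneg (hK : ∀ z : ℝ, K z = if 0 < z then Real.exp (-z) else 0) (z : ℝ) :
    0 ≤ K z := by
  rw [hK]; split <;> positivity

lemma aux_K_int (hK : ∀ z : ℝ, K z = if 0 < z then Real.exp (-z) else 0) :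
    Integrable K := by
  rw [aux_K_eq hK, integrable_indicator_iff measurableSet_Ioi]
  simpa using exp_neg_integrableOn_Ioi (0:ℝ) (one_pos)

lemma aux_K_one (hK : ∀ z : ℝ, K z = if 0 < z then Real.exp (-z) else 0) :
    ∫ y, K y = 1 := by
  rw [aux_K_eq hK, integral_indicator measurableSet_Ioi]
  exact integral_exp_neg_Ioi_zero

lemma aux_c_nonneg (hf : ∀ x, |f x| ≤ c / (1 + x ^ 2)) : 0 ≤ c := by
  have h := hf 0
  have h0 := abs_nonneg (f 0)
  norm_num at h
  linarith

lemma aux_abs_le_c (hf : ∀ x, |f x| ≤ c / (1 + x ^ 2)) (x : ℝ) : |f x| ≤ c := by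
  refine (hf x).trans (div_le_self (aux_c_nonneg hf) (by nlinarith [sq_nonneg x]))

lemma aux_conv_cont (hK : ∀ z : ℝ, K z = if 0 < z then Real.exp (-z) else 0)
    (hf_cont : Continuous f) (hf : ∀ x, |f x| ≤ c / (1 + x ^ 2)) :
    Continuous (fun x => ∫ y, K y * f (x - y)) := by
  apply continuous_of_dominated (bound := fun y => K y * c)
  · intro x
    exact ((aux_K_meas hK).aestronglyMeasurable.mul
      ((hf_cont.comp (continuous_const.sub continuous_id)).aestronglyMeasurable))
  · intro x
    filter_upwards with y
    rw [Real.norm_eq_abs, abs_mul, abs_of_nonneg (aux_K_nonneg hK y)]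
    exact mul_le_mul_of_nonneg_left (aux_abs_le_c hf _) (aux_K_nonneg hK y)
  · exact (aux_K_int hK).mul_const c
  · filter_upwards with y
    exact continuous_const.mul (hf_cont.comp (continuous_id.sub continuous_const))

lemma aux_conv_bound (hK : ∀ z : ℝ, K z = if 0 < z then Real.exp (-z) else 0)
    (hf : ∀ x, |f x| ≤ c / (1 + x ^ 2)) (x : ℝ) :
    |∫ y, K y * f (x - y)| ≤ c := by
  have h1 : |∫ y, K y * f (x - y)| ≤ ∫ y, K y * c := by
    rw [← Real.norm_eq_abs]
    apply norm_integral_le_of_norm_le ((aux_K_int hK).mul_const c)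
    filter_upwards with y
    rw [Real.norm_eq_abs, abs_mul, abs_of_nonneg (aux_K_nonneg hK y)]
    exact mul_le_mul_of_nonneg_left (aux_abs_le_c hf _) (aux_K_nonneg hK y)
  calc |∫ y, K y * f (x - y)| ≤ ∫ y, K y * c := h1
    _ = (∫ y, K y) * c := by rw [integral_mul_const]
    _ = c := by rw [aux_K_one hK, one_mul]

lemma aux_conv_y_int (hK : ∀ z : ℝ, K z = if 0 < z then Real.exp (-z) else 0)
    {g : ℝ → ℝ} (hg_cont : Continuous g) {d : ℝ} (hg : ∀ x, |g x| ≤ d) (x : ℝ) :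
    Integrable (fun y => K y * g (x - y)) := by
  refine ((aux_K_int hK).mul_const d).mono'
    ((aux_K_meas hK).aestronglyMeasurable.mul
      ((hg_cont.comp (continuous_const.sub continuous_id)).aestronglyMeasurable)) ?_
  filter_upwards with y
  rw [Real.norm_eq_abs, abs_mul, abs_of_nonneg (aux_K_nonneg hK y)]
  exact mul_le_mul_of_nonneg_left (hg _) (aux_K_nonneg hK y)

end Conv

lemma aux_conv_le {K f : ℝ → ℝ} {c : ℝ}
    (hK : ∀ z : ℝ, K z = if 0 < z then Real.exp (-z) else 0)
    (hf_cont : Continuous f) (hf : ∀ x, |f x| ≤ c / (1 + x ^ 2)) :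
    ∫ x, f x * (∫ y, K y * f (x - y)) ≤ ∫ x, f x ^ 2 := by
  have hc : 0 ≤ c := aux_c_nonneg hf
  have hfc : ∀ x, |f x| ≤ c := aux_abs_le_c hf
  set g : ℝ → ℝ := fun x => f x ^ 2 with hgdef
  have hg_cont : Continuous g := hf_cont.pow 2
  have hg_bd : ∀ x, |g x| ≤ c ^ 2 / (1 + x ^ 2) := by
    intro x
    have h1 : |g x| = |f x| * |f x| := by
      simp [hgdef, ← abs_mul, sq, mul_self_nonneg]
    have h2 : |f x| * |f x| ≤ (c / (1 + x ^ 2)) * c :=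
      mul_le_mul (hf x) (hfc x) (abs_nonneg _) (by positivity)
    rw [h1]
    calc |f x| * |f x| ≤ (c / (1 + x ^ 2)) * c := h2
      _ = c ^ 2 / (1 + x ^ 2) := by ring
  have hg_c : ∀ x, |g x| ≤ c ^ 2 := fun x => (hg_bd x).trans
    (div_le_self (by positivity) (by nlinarith [sq_nonneg x]))
  have hg_int : Integrable g := aux_integrable_of_decay hg_cont.aestronglyMeasurable hg_bd
  have hK_int := aux_K_int hK
  have hK0 := aux_K_nonneg hK
  have Hprod : Integrable (fun p : ℝ × ℝ => g p.1 * K p.2)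
      ((volume : Measure ℝ).prod volume) := hg_int.mul_prod hK_int
  have Hmp := measurePreserving_sub_prod (volume : Measure ℝ) volume
  have Hcomp : Integrable (fun p : ℝ × ℝ => g (p.1 - p.2) * K p.2)
      ((volume : Measure ℝ).prod volume) := by
    have := (Hmp.integrable_comp Hprod.aestronglyMeasurable).2 Hprod
    simpa [Function.comp_def] using this
  set Q : ℝ → ℝ := fun x => ∫ y, K y * g (x - y) with hQdef
  have hQeq : Q = fun x => ∫ y, g (x - y) * K y := by
    funext x; simp only [hQdef]; congr 1; funext y; ring
  have hQ_int : Integrable Q := by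
    rw [hQeq]; exact Hcomp.integral_prod_left
  have hQ_val : ∫ x, Q x = ∫ x, g x := by
    rw [hQeq, MeasureTheory.integral_integral_swap (by exact Hcomp)]
    have h1 : ∀ y : ℝ, (∫ x, g (x - y) * K y) = (∫ x, g x) * K y := fun y => by
      rw [integral_mul_const, integral_sub_right_eq_self g y]
    rw [integral_congr_ae (Filter.Eventually.of_forall h1), integral_const_mul,
      aux_K_one hK, mul_one]
  -- pointwise inequality
  have hconv_cont := aux_conv_cont hK hf_cont hf
  have hpt : ∀ x, f x * (∫ y, K y * f (x - y)) ≤ (1/2) * g x + (1/2) * Q x := by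
    intro x
    have hyf : Integrable (fun y => K y * f (x - y)) := aux_conv_y_int hK hf_cont hfc x
    have hyg : Integrable (fun y => K y * g (x - y)) := aux_conv_y_int hK hg_cont hg_c x
    have h1 : f x * (∫ y, K y * f (x - y)) = ∫ y, f x * (K y * f (x - y)) :=
      (integral_const_mul _ _).symm
    have hRint : Integrable (fun y => (1/2) * (K y * g x) + (1/2) * (K y * g (x - y))) :=
      (((hK_int.mul_const (g x)).const_mul (1/2)).add (hyg.const_mul (1/2)))
    have h2 : ∫ y, f x * (K y * f (x - y))
        ≤ ∫ y, ((1/2) * (K y * g x) + (1/2) * (K y * g (x - y))) := by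
      apply integral_mono (hyf.const_mul (f x)) hRint
      intro y
      have hsq := two_mul_le_add_sq (f x) (f (x - y))
      have := mul_le_mul_of_nonneg_left hsq (hK0 y)
      simp only [hgdef]
      nlinarith [hK0 y]
    have h3 : ∫ y, ((1/2) * (K y * g x) + (1/2) * (K y * g (x - y)))
        = (1/2) * g x + (1/2) * Q x := by
      rw [integral_add ((hK_int.mul_const (g x)).const_mul (1/2)) (hyg.const_mul (1/2)),
        integral_const_mul, integral_const_mul, integral_mul_const, aux_K_one hK, one_mul,
        hQdef]
    rw [h1]
    rw [h3] at h2
    exact h2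
  -- integrate
  have hlhs_int : Integrable (fun x => f x * (∫ y, K y * f (x - y))) := by
    apply aux_integrable_of_decay (hf_cont.mul hconv_cont).aestronglyMeasurable
      (c := c * c)
    intro x
    change |f x * _| ≤ _
    rw [abs_mul]
    calc |f x| * |∫ y, K y * f (x - y)| ≤ (c / (1 + x ^ 2)) * c :=
          mul_le_mul (hf x) (aux_conv_bound hK hf x) (abs_nonneg _) (by positivity)
      _ = c * c / (1 + x ^ 2) := by ring
  calc ∫ x, f x * (∫ y, K y * f (x - y))
      ≤ ∫ x, ((1/2) * g x + (1/2) * Q x) := by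
        apply integral_mono hlhs_int ((hg_int.const_mul _).add (hQ_int.const_mul _)) hpt
    _ = (1/2) * (∫ x, g x) + (1/2) * (∫ x, Q x) := by
        rw [integral_add (hg_int.const_mul _) (hQ_int.const_mul _),
          integral_const_mul, integral_const_mul]
    _ = ∫ x, g x := by rw [hQ_val]; ring

lemma aux_lintegral_sq {f : ℝ → ℝ} (hf : Integrable (fun x => f x ^ 2)) :
    (∫⁻ x, (‖f x‖₊ : ℝ≥0∞) ^ (2:ℝ)) = ENNReal.ofReal (∫ x, f x ^ 2) := by
  rw [MeasureTheory.ofReal_integral_eq_lintegral_ofReal hf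
    (Filter.Eventually.of_forall fun x => sq_nonneg _)]
  apply lintegral_congr fun x => ?_
  rw [show ((2:ℝ)) = ((2:ℕ):ℝ) by norm_num, ENNReal.rpow_natCast,
    ← enorm_eq_nnnorm, Real.enorm_eq_ofReal_abs, ← ENNReal.ofReal_pow (abs_nonneg _), sq_abs]

lemma aux_eLpNorm_le {f h : ℝ → ℝ} (hf : Integrable (fun x => f x ^ 2))
    (hh : Integrable (fun x => h x ^ 2)) (hle : ∫ x, f x ^ 2 ≤ ∫ x, h x ^ 2) :
    eLpNorm f 2 (volume : Measure ℝ) ≤ eLpNorm h 2 (volume : Measure ℝ) := by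
  rw [eLpNorm_eq_lintegral_rpow_enorm_toReal (by norm_num) (by norm_num),
    eLpNorm_eq_lintegral_rpow_enorm_toReal (by norm_num) (by norm_num)]
  simp only [ENNReal.toReal_ofNat, enorm_eq_nnnorm]
  rw [aux_lintegral_sq hf, aux_lintegral_sq hh]
  exact ENNReal.rpow_le_rpow (ENNReal.ofReal_le_ofReal hle) (by norm_num)

lemma aux_prod_bound {a b c d P : ℝ} (hP : 0 < P) (ha : |a| ≤ c) (hb : |b| ≤ d / P) :
    |a * b| ≤ c * d / P := by
  rw [abs_mul]
  have h1 : 0 ≤ c := le_trans (abs_nonneg a) ha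
  calc |a| * |b| ≤ c * (d / P) := mul_le_mul ha hb (abs_nonneg b) h1
    _ = c * d / P := by ring

/-- The `L²(ℝ)`-norm does not increase along classical, spatially decaying solutions of the
augmented Burgers equation `u_t = (u²/2)_x + u_xx + K*u - u + u_x` with
`K(z) = e^{-z} 1_{z>0}`. -/
theorem eLpNorm_le_of_augmented_burgers_solution
    (K : ℝ → ℝ) (hK : ∀ z : ℝ, K z = if 0 < z then Real.exp (-z) else 0)
    (T : ℝ) (hT : 0 < T)
    (u ut ux uxx : ℝ → ℝ → ℝ)
    (hu_cont : ContinuousOn (fun p : ℝ × ℝ => u p.1 p.2) (Set.Icc 0 T ×ˢ Set.univ))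
    (hut_cont : ContinuousOn (fun p : ℝ × ℝ => ut p.1 p.2) (Set.Icc 0 T ×ˢ Set.univ))
    (hux_cont : ContinuousOn (fun p : ℝ × ℝ => ux p.1 p.2) (Set.Icc 0 T ×ˢ Set.univ))
    (huxx_cont : ContinuousOn (fun p : ℝ × ℝ => uxx p.1 p.2) (Set.Icc 0 T ×ˢ Set.univ))
    (hut : ∀ t ∈ Set.Icc 0 T, ∀ x : ℝ,
      HasDerivWithinAt (fun s => u s x) (ut t x) (Set.Icc 0 T) t)
    (hux : ∀ t ∈ Set.Icc 0 T, ∀ x : ℝ, HasDerivAt (fun y => u t y) (ux t x) x)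
    (huxx : ∀ t ∈ Set.Icc 0 T, ∀ x : ℝ, HasDerivAt (fun y => ux t y) (uxx t x) x)
    (C : ℝ)
    (hdecay : ∀ t ∈ Set.Icc 0 T, ∀ x : ℝ,
      |u t x| + |ut t x| + |ux t x| + |uxx t x| ≤ C / (1 + x ^ 2))
    (hpde : ∀ t ∈ Set.Icc 0 T, ∀ x : ℝ,
      ut t x = u t x * ux t x + uxx t x
        + ((∫ y : ℝ, K y * u t (x - y)) - u t x) + ux t x) :
    ∀ t ∈ Set.Icc 0 T,
      eLpNorm (fun x => u t x) 2 (volume : Measure ℝ)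
        ≤ eLpNorm (fun x => u 0 x) 2 (volume : Measure ℝ) := by
  have h0T : (0:ℝ) ∈ Set.Icc 0 T := ⟨le_refl 0, hT.le⟩
  -- slices in x
  have slice : ∀ (v : ℝ → ℝ → ℝ),
      ContinuousOn (fun p : ℝ × ℝ => v p.1 p.2) (Set.Icc 0 T ×ˢ Set.univ) →
      ∀ s ∈ Set.Icc 0 T, Continuous (fun x => v s x) := by
    intro v hv s hs
    rw [← continuousOn_univ]
    have : Continuous (fun x : ℝ => ((s, x) : ℝ × ℝ)) := by fun_prop
    have h2 : ContinuousOn ((fun p : ℝ × ℝ => v p.1 p.2) ∘ (fun x : ℝ => (s, x)))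
        Set.univ := hv.comp this.continuousOn (fun x _ => ⟨hs, trivial⟩)
    simpa [Function.comp_def] using h2
  -- slices in t
  have tslice : ∀ x : ℝ, ContinuousOn (fun s => u s x) (Set.Icc 0 T) := by
    intro x
    have : Continuous (fun s : ℝ => ((s, x) : ℝ × ℝ)) := by fun_prop
    have h2 : ContinuousOn ((fun p : ℝ × ℝ => u p.1 p.2) ∘ (fun s : ℝ => (s, x)))
        (Set.Icc 0 T) := hu_cont.comp this.continuousOn (fun s hs => ⟨hs, trivial⟩)
    simpa [Function.comp_def] using h2
  -- componentwise decay
  have habs : ∀ s ∈ Set.Icc 0 T, ∀ x : ℝ, |u s x| ≤ C / (1 + x ^ 2)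
      ∧ |ut s x| ≤ C / (1 + x ^ 2) ∧ |ux s x| ≤ C / (1 + x ^ 2)
      ∧ |uxx s x| ≤ C / (1 + x ^ 2) := by
    intro s hs x
    have h := hdecay s hs x
    have a1 := abs_nonneg (u s x); have a2 := abs_nonneg (ut s x)
    have a3 := abs_nonneg (ux s x); have a4 := abs_nonneg (uxx s x)
    exact ⟨by linarith, by linarith, by linarith, by linarith⟩
  have hC : 0 ≤ C := by
    have h := (habs 0 h0T 0).1
    norm_num at h
    linarith [abs_nonneg (u 0 0)]
  have hCle : ∀ s ∈ Set.Icc 0 T, ∀ x : ℝ, |u s x| ≤ C :=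
    fun s hs x => aux_abs_le_c (fun x => (habs s hs x).1) x
  have hP : ∀ x : ℝ, (0:ℝ) < 1 + x ^ 2 := fun x => by positivity
  have hCleP : ∀ x : ℝ, C / (1 + x ^ 2) ≤ C :=
    fun x => div_le_self hC (by nlinarith [sq_nonneg x])
  have hbint : ∀ c : ℝ, Integrable (fun x : ℝ => c / (1 + x ^ 2)) := by
    intro c
    simpa [div_eq_mul_inv] using integrable_inv_one_add_sq.const_mul c
  -- integrability of squares
  have hu2_int : ∀ s ∈ Set.Icc 0 T, Integrable (fun x => u s x ^ 2) := by
    intro s hs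
    apply aux_integrable_of_decay (((slice u hu_cont s hs).pow 2).aestronglyMeasurable)
      (c := C * C)
    intro x
    have := aux_prod_bound (hP x) (hCle s hs x) (habs s hs x).1
    calc |u s x ^ 2| = |u s x * u s x| := by rw [sq]
      _ ≤ C * C / (1 + x ^ 2) := this
  -- continuity of the energy
  have hF_cont : ContinuousOn (fun s => ∫ x, u s x ^ 2) (Set.Icc 0 T) := by
    apply continuousOn_of_dominated (bound := fun x => C * C / (1 + x ^ 2))
    · exact fun s hs => ((slice u hu_cont s hs).pow 2).aestronglyMeasurable
    · intro s hs
      filter_upwards with x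
      rw [Real.norm_eq_abs]
      have := aux_prod_bound (hP x) (hCle s hs x) (habs s hs x).1
      calc |u s x ^ 2| = |u s x * u s x| := by rw [sq]
        _ ≤ C * C / (1 + x ^ 2) := this
    · exact hbint (C * C)
    · filter_upwards with x
      exact (tslice x).pow 2
  -- derivative of the energy
  have hderivF : ∀ t₀ ∈ Set.Ioo 0 T,
      HasDerivAt (fun s => ∫ x, u s x ^ 2) (∫ x, 2 * u t₀ x * ut t₀ x) t₀ := by
    intro t₀ ht₀
    have hε0 : 0 < min t₀ (T - t₀) := lt_min ht₀.1 (sub_pos.2 ht₀.2)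
    have hball : Metric.ball t₀ (min t₀ (T - t₀)) ⊆ Set.Ioo 0 T := by
      intro s hs
      rw [Metric.mem_ball, Real.dist_eq, abs_lt] at hs
      have h1 := min_le_left t₀ (T - t₀)
      have h2 := min_le_right t₀ (T - t₀)
      exact ⟨by linarith [hs.1], by linarith [hs.2]⟩
    refine (hasDerivAt_integral_of_dominated_loc_of_deriv_le (Metric.ball_mem_nhds t₀ hε0)
      (F := fun s x => u s x ^ 2) (F' := fun s x => 2 * u s x * ut s x)
      (bound := fun x => (2 * C) * C / (1 + x ^ 2)) ?_ ?_ ?_ ?_ ?_ ?_).2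
    · filter_upwards [Metric.ball_mem_nhds t₀ hε0] with s hs
      exact ((slice u hu_cont s (Set.Ioo_subset_Icc_self (hball hs))).pow 2).aestronglyMeasurable
    · exact hu2_int t₀ (Set.Ioo_subset_Icc_self ht₀)
    · have hc1 := slice u hu_cont t₀ (Set.Ioo_subset_Icc_self ht₀)
      have hc2 := slice ut hut_cont t₀ (Set.Ioo_subset_Icc_self ht₀)
      exact ((continuous_const.mul hc1).mul hc2).aestronglyMeasurable
    · filter_upwards with x
      intro s hs
      have hsI := Set.Ioo_subset_Icc_self (hball hs)
      rw [Real.norm_eq_abs]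
      have h1 : |2 * u s x| ≤ 2 * C := by
        rw [abs_mul, abs_two]
        exact mul_le_mul_of_nonneg_left (hCle s hsI x) (by norm_num)
      exact aux_prod_bound (hP x) h1 (habs s hsI x).2.1
    · exact hbint _
    · filter_upwards with x
      intro s hs
      have hsO := hball hs
      have h := (hut s (Set.Ioo_subset_Icc_self hsO) x).hasDerivAt
        (Icc_mem_nhds hsO.1 hsO.2)
      have h2 : HasDerivAt (fun s => u s x ^ 2) _ s := h.pow 2
      refine h2.congr_deriv ?_
      push_cast
      ring
  -- the energy derivative is nonpositive
  have hkey : ∀ s ∈ Set.Icc 0 T, (∫ x, 2 * u s x * ut s x) ≤ 0 := by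
    intro s hs
    have hus_cont := slice u hu_cont s hs
    have huxs_cont := slice ux hux_cont s hs
    have huxxs_cont := slice uxx huxx_cont s hs
    have hdu : ∀ x, |u s x| ≤ C / (1 + x ^ 2) := fun x => (habs s hs x).1
    have hdux : ∀ x, |ux s x| ≤ C / (1 + x ^ 2) := fun x => (habs s hs x).2.2.1
    have hduxx : ∀ x, |uxx s x| ≤ C / (1 + x ^ 2) := fun x => (habs s hs x).2.2.2
    have hCu : ∀ x, |u s x| ≤ C := hCle s hs
    have hCux : ∀ x, |ux s x| ≤ C := fun x => (hdux x).trans (hCleP x)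
    -- A-part : ∫ (2 u² ux + 2 u ux) = 0
    have hA : (∫ x, (2 * u s x ^ 2 * ux s x + 2 * u s x * ux s x)) = 0 := by
      apply aux_integral_deriv_eq_zero
        (g := fun x => (2/3) * u s x ^ 3 + u s x ^ 2)
        (c := (2/3 * C * C) * C + C * C)
      · intro x
        have h := hux s hs x
        have h2 : HasDerivAt (fun x => (2:ℝ)/3 * u s x ^ 3 + u s x ^ 2) _ x :=
          ((h.pow 3).const_mul ((2:ℝ)/3)).add (h.pow 2)
        convert h2 using 1
        push_cast
        ring
      · apply aux_integrable_of_decay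
          (((continuous_const.mul ((hus_cont.pow 2))).mul huxs_cont).add
            ((continuous_const.mul hus_cont).mul huxs_cont)).aestronglyMeasurable
          (c := (2 * C * C) * C + (2 * C) * C)
        intro x
        have h1 : |2 * u s x ^ 2| ≤ 2 * C * C := by
          rw [abs_mul, abs_two, sq, abs_mul]
          have := mul_le_mul (hCu x) (hCu x) (abs_nonneg _) hC
          nlinarith [abs_nonneg (u s x)]
        have hb1 := aux_prod_bound (hP x) h1 (hdux x)
        have h2 : |2 * u s x| ≤ 2 * C := by
          rw [abs_mul, abs_two]
          exact mul_le_mul_of_nonneg_left (hCu x) (by norm_num)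
        have hb2 := aux_prod_bound (hP x) h2 (hdux x)
        calc |2 * u s x ^ 2 * ux s x + 2 * u s x * ux s x|
            ≤ |2 * u s x ^ 2 * ux s x| + |2 * u s x * ux s x| := abs_add_le _ _
          _ ≤ (2 * C * C) * C / (1 + x ^ 2) + (2 * C) * C / (1 + x ^ 2) := by
              refine add_le_add ?_ ?_
              · simpa [mul_assoc] using hb1
              · simpa [mul_assoc] using hb2
          _ = ((2 * C * C) * C + (2 * C) * C) / (1 + x ^ 2) := by ring
      · intro x
        have h1 : |(2:ℝ)/3 * u s x ^ 2| ≤ 2/3 * C * C := by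
          rw [abs_mul, sq, abs_mul]
          have h2 := mul_le_mul (hCu x) (hCu x) (abs_nonneg _) hC
          have : |(2:ℝ)/3| = 2/3 := by norm_num
          nlinarith [abs_nonneg (u s x)]
        have hb1 : |((2:ℝ)/3 * u s x ^ 2) * u s x| ≤ (2/3 * C * C) * C / (1 + x ^ 2) :=
          aux_prod_bound (hP x) h1 (hdu x)
        have hb2 : |u s x * u s x| ≤ C * C / (1 + x ^ 2) :=
          aux_prod_bound (hP x) (hCu x) (hdu x)
        calc |(2:ℝ)/3 * u s x ^ 3 + u s x ^ 2|
            ≤ |(2:ℝ)/3 * u s x ^ 3| + |u s x ^ 2| := abs_add_le _ _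
          _ ≤ (2/3 * C * C) * C / (1 + x ^ 2) + C * C / (1 + x ^ 2) := by
              refine add_le_add ?_ ?_
              · have : (2:ℝ)/3 * u s x ^ 3 = ((2:ℝ)/3 * u s x ^ 2) * u s x := by ring
                rw [this]; exact hb1
              · rw [sq]; exact hb2
          _ = ((2/3 * C * C) * C + C * C) / (1 + x ^ 2) := by ring
    -- B-part : ∫ (2 ux² + 2 u uxx) = 0
    have hintB : Integrable (fun x => 2 * ux s x ^ 2 + 2 * u s x * uxx s x) := by
      apply aux_integrable_of_decay
        ((continuous_const.mul (huxs_cont.pow 2)).add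
          ((continuous_const.mul hus_cont).mul huxxs_cont)).aestronglyMeasurable
        (c := (2 * C) * C + (2 * C) * C)
      intro x
      have h1 : |2 * ux s x| ≤ 2 * C := by
        rw [abs_mul, abs_two]
        exact mul_le_mul_of_nonneg_left (hCux x) (by norm_num)
      have hb1 := aux_prod_bound (hP x) h1 (hdux x)
      have h2 : |2 * u s x| ≤ 2 * C := by
        rw [abs_mul, abs_two]
        exact mul_le_mul_of_nonneg_left (hCu x) (by norm_num)
      have hb2 := aux_prod_bound (hP x) h2 (hduxx x)
      calc |2 * ux s x ^ 2 + 2 * u s x * uxx s x|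
          ≤ |2 * ux s x ^ 2| + |2 * u s x * uxx s x| := abs_add_le _ _
        _ ≤ (2 * C) * C / (1 + x ^ 2) + (2 * C) * C / (1 + x ^ 2) := by
            refine add_le_add ?_ ?_
            · have : 2 * ux s x ^ 2 = (2 * ux s x) * ux s x := by ring
              rw [this]; exact hb1
            · have : 2 * u s x * uxx s x = (2 * u s x) * uxx s x := by ring
              rw [this]; exact hb2
        _ = ((2 * C) * C + (2 * C) * C) / (1 + x ^ 2) := by ring
    have hB : (∫ x, (2 * ux s x ^ 2 + 2 * u s x * uxx s x)) = 0 := by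
      apply aux_integral_deriv_eq_zero (g := fun x => 2 * (u s x * ux s x))
        (c := 2 * (C * C)) _ hintB
      · intro x
        have h2 : |u s x * ux s x| ≤ C * C / (1 + x ^ 2) :=
          aux_prod_bound (hP x) (hCu x) (hdux x)
        calc |2 * (u s x * ux s x)| = 2 * |u s x * ux s x| := by
              rw [abs_mul, abs_two]
          _ ≤ 2 * (C * C / (1 + x ^ 2)) := by linarith
          _ = 2 * (C * C) / (1 + x ^ 2) := by ring
      · intro x
        have h : HasDerivAt (fun y => 2 * (u s y * ux s y)) _ x :=
          ((hux s hs x).mul (huxx s hs x)).const_mul (2:ℝ)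
        convert h using 1
        ring
    -- convolution part
    have hconv_le := aux_conv_le hK hus_cont hdu
    have hconv_cont := aux_conv_cont hK hus_cont hdu
    have hconv_bd := fun x => aux_conv_bound hK hdu x
    have hintuconv : Integrable (fun x => u s x * (∫ y, K y * u s (x - y))) := by
      apply aux_integrable_of_decay (hus_cont.mul hconv_cont).aestronglyMeasurable
        (c := C * C)
      intro x
      have h1 : |(∫ y, K y * u s (x - y)) * u s x| ≤ C * C / (1 + x ^ 2) :=
        aux_prod_bound (hP x) (hconv_bd x) (hdu x)
      calc |u s x * (∫ y, K y * u s (x - y))|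
          = |(∫ y, K y * u s (x - y)) * u s x| := by rw [mul_comm]
        _ ≤ C * C / (1 + x ^ 2) := h1
    have hintu2 := hu2_int s hs
    have hintE : Integrable (fun x => 2 * ux s x ^ 2) := by
      apply aux_integrable_of_decay
        (continuous_const.mul (huxs_cont.pow 2)).aestronglyMeasurable
        (c := (2 * C) * C)
      intro x
      have h1 : |2 * ux s x| ≤ 2 * C := by
        rw [abs_mul, abs_two]
        exact mul_le_mul_of_nonneg_left (hCux x) (by norm_num)
      have hb1 := aux_prod_bound (hP x) h1 (hdux x)
      have h2 : 2 * ux s x ^ 2 = (2 * ux s x) * ux s x := by ring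
      change |2 * ux s x ^ 2| ≤ _
      rw [h2]; exact hb1
    have hintA : Integrable (fun x => 2 * u s x ^ 2 * ux s x + 2 * u s x * ux s x) := by
      apply aux_integrable_of_decay
        (((continuous_const.mul ((hus_cont.pow 2))).mul huxs_cont).add
          ((continuous_const.mul hus_cont).mul huxs_cont)).aestronglyMeasurable
        (c := (2 * C * C) * C + (2 * C) * C)
      intro x
      have h1 : |2 * u s x ^ 2| ≤ 2 * C * C := by
        rw [abs_mul, abs_two, sq, abs_mul]
        have := mul_le_mul (hCu x) (hCu x) (abs_nonneg _) hC
        nlinarith [abs_nonneg (u s x)]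
      have hb1 := aux_prod_bound (hP x) h1 (hdux x)
      have h2 : |2 * u s x| ≤ 2 * C := by
        rw [abs_mul, abs_two]
        exact mul_le_mul_of_nonneg_left (hCu x) (by norm_num)
      have hb2 := aux_prod_bound (hP x) h2 (hdux x)
      calc |2 * u s x ^ 2 * ux s x + 2 * u s x * ux s x|
          ≤ |2 * u s x ^ 2 * ux s x| + |2 * u s x * ux s x| := abs_add_le _ _
        _ ≤ (2 * C * C) * C / (1 + x ^ 2) + (2 * C) * C / (1 + x ^ 2) := by
            refine add_le_add ?_ ?_
            · simpa [mul_assoc] using hb1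
            · simpa [mul_assoc] using hb2
        _ = ((2 * C * C) * C + (2 * C) * C) / (1 + x ^ 2) := by ring
    have hintD : Integrable
        (fun x => 2 * (u s x * (∫ y, K y * u s (x - y))) - 2 * u s x ^ 2) :=
      (hintuconv.const_mul 2).sub (hintu2.const_mul 2)
    have hid : ∀ x, 2 * u s x * ut s x =
        (2 * u s x ^ 2 * ux s x + 2 * u s x * ux s x)
        + (2 * ux s x ^ 2 + 2 * u s x * uxx s x)
        + (2 * (u s x * (∫ y, K y * u s (x - y))) - 2 * u s x ^ 2)
        - 2 * ux s x ^ 2 := by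
      intro x
      rw [hpde s hs x]
      ring
    have hE0 : 0 ≤ ∫ x, 2 * ux s x ^ 2 := integral_nonneg fun x => by positivity
    have H2 : Integrable (fun x => (2 * u s x ^ 2 * ux s x + 2 * u s x * ux s x)
        + (2 * ux s x ^ 2 + 2 * u s x * uxx s x)) := hintA.add hintB
    have H1 : Integrable (fun x => (2 * u s x ^ 2 * ux s x + 2 * u s x * ux s x)
        + (2 * ux s x ^ 2 + 2 * u s x * uxx s x)
        + (2 * (u s x * (∫ y, K y * u s (x - y))) - 2 * u s x ^ 2)) := H2.add hintD
    have estart : (∫ x, 2 * u s x * ut s x)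
        = ∫ x, ((2 * u s x ^ 2 * ux s x + 2 * u s x * ux s x)
            + (2 * ux s x ^ 2 + 2 * u s x * uxx s x)
            + (2 * (u s x * (∫ y, K y * u s (x - y))) - 2 * u s x ^ 2)
            - 2 * ux s x ^ 2) :=
      integral_congr_ae (Filter.Eventually.of_forall hid)
    have e1 : (∫ x, ((2 * u s x ^ 2 * ux s x + 2 * u s x * ux s x)
            + (2 * ux s x ^ 2 + 2 * u s x * uxx s x)
            + (2 * (u s x * (∫ y, K y * u s (x - y))) - 2 * u s x ^ 2)
            - 2 * ux s x ^ 2))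
        = (∫ x, ((2 * u s x ^ 2 * ux s x + 2 * u s x * ux s x)
            + (2 * ux s x ^ 2 + 2 * u s x * uxx s x)
            + (2 * (u s x * (∫ y, K y * u s (x - y))) - 2 * u s x ^ 2)))
          - ∫ x, 2 * ux s x ^ 2 := integral_sub H1 hintE
    have e2 : (∫ x, ((2 * u s x ^ 2 * ux s x + 2 * u s x * ux s x)
            + (2 * ux s x ^ 2 + 2 * u s x * uxx s x)
            + (2 * (u s x * (∫ y, K y * u s (x - y))) - 2 * u s x ^ 2)))
        = (∫ x, ((2 * u s x ^ 2 * ux s x + 2 * u s x * ux s x)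
            + (2 * ux s x ^ 2 + 2 * u s x * uxx s x)))
          + ∫ x, (2 * (u s x * (∫ y, K y * u s (x - y))) - 2 * u s x ^ 2) :=
      integral_add H2 hintD
    have e3 : (∫ x, ((2 * u s x ^ 2 * ux s x + 2 * u s x * ux s x)
            + (2 * ux s x ^ 2 + 2 * u s x * uxx s x)))
        = (∫ x, (2 * u s x ^ 2 * ux s x + 2 * u s x * ux s x))
          + ∫ x, (2 * ux s x ^ 2 + 2 * u s x * uxx s x) := integral_add hintA hintB
    have d1 : (∫ x, (2 * (u s x * (∫ y, K y * u s (x - y))) - 2 * u s x ^ 2))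
        = (∫ x, 2 * (u s x * (∫ y, K y * u s (x - y)))) - ∫ x, 2 * u s x ^ 2 :=
      integral_sub (hintuconv.const_mul 2) (hintu2.const_mul 2)
    have d2 : (∫ x, 2 * (u s x * (∫ y, K y * u s (x - y))))
        = 2 * ∫ x, u s x * (∫ y, K y * u s (x - y)) := integral_const_mul 2 _
    have d3 : (∫ x, 2 * u s x ^ 2) = 2 * ∫ x, u s x ^ 2 := integral_const_mul 2 _
    rw [estart, e1, e2, e3, hA, hB, d1, d2, d3]
    linarith [hconv_le, hE0]
  -- monotonicity of the energy
  have hanti : AntitoneOn (fun s => ∫ x, u s x ^ 2) (Set.Icc 0 T) := by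
    apply antitoneOn_of_deriv_nonpos (convex_Icc 0 T) hF_cont
    · intro s hs
      rw [interior_Icc] at hs
      exact (hderivF s hs).differentiableAt.differentiableWithinAt
    · intro s hs
      rw [interior_Icc] at hs
      rw [(hderivF s hs).deriv]
      exact hkey s (Set.Ioo_subset_Icc_self hs)
  intro t ht
  exact aux_eLpNorm_le (hu2_int t ht) (hu2_int 0 h0T) (hanti h0T ht ht.1)
end

section
/- Let K(z) = e^{-z} for z > 0 and K(z) = 0 for z ≤ 0, and for λ > 0 set K_λ(z) = λK(λz). Let u : ℝ → ℝ be differentiable at every point with u ∈ L¹(ℝ) and u' ∈ L¹(ℝ), and let ρ : ℝ → ℝ be twice differentiable with ρ, ρ', ρ'' bounded. Then for every λ > 0: |∫_ℝ (λ²((K_λ*u)(x) − u(x)) + λ u'(x)) ρ(x) dx| ≤ ‖u‖_{L¹(ℝ)} · sup_{y∈ℝ} |ρ''(y)|. -/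
open MeasureTheory Set

lemma kernel_moment_int {lam : ℝ} (hlam : 0 < lam) (n : ℕ) :
    IntegrableOn (fun y : ℝ => y ^ n * Real.exp (-(lam * y))) (Set.Ioi 0) := by
  have h := integrableOn_rpow_mul_exp_neg_mul_rpow (p := 1) (s := (n : ℝ))
    (by linarith [Nat.cast_nonneg (α := ℝ) n]) one_pos hlam
  refine h.congr_fun (fun x hx => ?_) measurableSet_Ioi
  dsimp only
  rw [Real.rpow_natCast, Real.rpow_one, neg_mul]

lemma kernel_moment_val {lam : ℝ} (hlam : 0 < lam) (n : ℕ) :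
    ∫ y in Set.Ioi 0, y ^ n * Real.exp (-(lam * y)) = n.factorial / lam ^ (n + 1) := by
  have h := Real.integral_rpow_mul_exp_neg_mul_Ioi (a := (n : ℝ) + 1) (r := lam)
    (by positivity) hlam
  simp only [add_sub_cancel_right] at h
  rw [show (∫ y in Set.Ioi 0, y ^ n * Real.exp (-(lam * y)))
      = ∫ t in Set.Ioi 0, t ^ (n : ℝ) * Real.exp (-(lam * t)) from
    setIntegral_congr_fun measurableSet_Ioi (fun t _ => by rw [Real.rpow_natCast]), h]
  rw [show ((n : ℝ) + 1) = ((n + 1 : ℕ) : ℝ) by push_cast; ring, Real.rpow_natCast,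
    Nat.cast_add, Nat.cast_one, Real.Gamma_nat_eq_factorial]
  field_simp
  rw [← mul_pow, one_div, inv_mul_cancel₀ hlam.ne', one_pow]

lemma taylor_bound' {ρ : ℝ → ℝ} (hρ : Differentiable ℝ ρ) (hρ' : Differentiable ℝ (deriv ρ))
    {C : ℝ} (hC : ∀ y, |deriv (deriv ρ) y| ≤ C) (w y : ℝ) (hy : 0 ≤ y) :
    |ρ (w + y) - ρ w - deriv ρ w * y| ≤ C / 2 * y ^ 2 := by
  have hC0 : 0 ≤ C := le_trans (abs_nonneg _) (hC 0)
  have hlip : ∀ a b : ℝ, |deriv ρ b - deriv ρ a| ≤ C * |b - a| := by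
    intro a b
    have := Convex.norm_image_sub_le_of_norm_deriv_le (f := deriv ρ) (s := Set.univ)
      (fun x _ => hρ' x) (fun x _ => by simpa [Real.norm_eq_abs] using hC x) convex_univ
      (Set.mem_univ a) (Set.mem_univ b)
    simpa [Real.norm_eq_abs] using this
  set φ : ℝ → ℝ := fun t => ρ (w + t) - ρ w - deriv ρ w * t with hφdef
  have hφd : ∀ t, HasDerivAt φ (deriv ρ (w + t) - deriv ρ w) t := by
    intro t
    have h1 : HasDerivAt (fun t => ρ (w + t)) (deriv ρ (w + t)) t := by
      have := (hρ (w + t)).hasDerivAt.comp t ((hasDerivAt_id t).const_add w)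
      simpa [Function.comp_def] using this
    have := (h1.sub_const (ρ w)).sub ((hasDerivAt_id t).const_mul (deriv ρ w))
    simp only [mul_one] at this
    exact this
  have bound : ∀ ε : ℝ, ε = 1 ∨ ε = -1 → ε * φ y ≤ C / 2 * y ^ 2 := by
    intro ε hε
    set ψ : ℝ → ℝ := fun t => C / 2 * t ^ 2 - ε * φ t with hψdef
    have hψd : ∀ t, HasDerivAt ψ (C * t - ε * (deriv ρ (w + t) - deriv ρ w)) t := by
      intro t
      have h1 : HasDerivAt (fun t : ℝ => C / 2 * t ^ 2) (C * t) t := by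
        have := (hasDerivAt_pow 2 t).const_mul (C / 2)
        exact this.congr_deriv (by norm_num; ring)
      exact h1.sub ((hφd t).const_mul ε)
    have hmono : MonotoneOn ψ (Set.Ici 0) := by
      apply monotoneOn_of_deriv_nonneg (convex_Ici 0)
      · exact fun t _ => (hψd t).continuousAt.continuousWithinAt
      · exact fun t _ => (hψd t).differentiableAt.differentiableWithinAt
      · intro t ht
        rw [interior_Ici] at ht
        rw [(hψd t).deriv]
        have h2 : |deriv ρ (w + t) - deriv ρ w| ≤ C * t := by
          have := hlip w (w + t)
          simpa [abs_of_pos (show (0:ℝ) < t from ht)] using this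
        rcases abs_le.mp h2 with ⟨hl, hr⟩
        rcases hε with h | h <;> subst h <;> nlinarith
    have h0 : ψ 0 ≤ ψ y := hmono Set.self_mem_Ici (Set.mem_Ici.mpr hy) hy
    have hz : ψ 0 = 0 := by simp [hψdef, hφdef]
    have : 0 ≤ ψ y := hz ▸ h0
    simp only [hψdef] at this
    linarith
  have h1 := bound 1 (Or.inl rfl)
  have h2 := bound (-1) (Or.inr rfl)
  rw [abs_le]
  constructor <;> [linarith; linarith]

/-- For the rescaled kernel `K_λ(z) = λK(λz)` of `K(z) = e^{-z} 1_{z>0}`, a differentiable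
`u` with `u, u' ∈ L¹(ℝ)`, and a twice differentiable `ρ` with `ρ, ρ', ρ''` bounded,
`|∫ (λ²(K_λ*u - u) + λu') ρ| ≤ ‖u‖_{L¹} sup_y |ρ''(y)|` for all `λ > 0`. -/
theorem abs_integral_rescaled_nonlocal_mul_test_le
    (K : ℝ → ℝ) (hK : ∀ z : ℝ, K z = if 0 < z then Real.exp (-z) else 0)
    (Kl : ℝ → ℝ → ℝ) (hKl : ∀ lam z : ℝ, Kl lam z = lam * K (lam * z))
    (u : ℝ → ℝ) (hu : Differentiable ℝ u)
    (hu1 : Integrable u) (hu'1 : Integrable (deriv u))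
    (ρ : ℝ → ℝ) (hρ : Differentiable ℝ ρ) (hρ' : Differentiable ℝ (deriv ρ))
    (hρbdd : BddAbove (Set.range fun y : ℝ => |ρ y|))
    (hρ'bdd : BddAbove (Set.range fun y : ℝ => |deriv ρ y|))
    (hρ''bdd : BddAbove (Set.range fun y : ℝ => |deriv (deriv ρ) y|))
    (lam : ℝ) (hlam : 0 < lam) :
    |∫ x : ℝ,
        (lam ^ 2 * ((∫ y : ℝ, Kl lam y * u (x - y)) - u x) + lam * deriv u x) * ρ x|
      ≤ (∫ x : ℝ, |u x|) * ⨆ y : ℝ, |deriv (deriv ρ) y| := by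
  -- notation
  set C := ⨆ y : ℝ, |deriv (deriv ρ) y| with hCdef
  have hCle : ∀ y, |deriv (deriv ρ) y| ≤ C := fun y => le_ciSup hρ''bdd y
  have hC0 : 0 ≤ C := le_trans (abs_nonneg _) (hCle 0)
  obtain ⟨Mρ, hMρ0⟩ := hρbdd
  have hMρ : ∀ y, |ρ y| ≤ Mρ := fun y => hMρ0 (Set.mem_range_self y)
  have hρcont : Continuous ρ := hρ.continuous
  have hρ'cont : Continuous (deriv ρ) := hρ'.continuous
  have hucont : Continuous u := hu.continuous
  -- the kernel as an indicator
  set k : ℝ → ℝ := fun y => lam * Real.exp (-(lam * y)) with hkdef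
  have hkcont : Continuous k := by fun_prop
  have hKl_ind : Kl lam = Set.indicator (Set.Ioi 0) k := by
    funext y
    rw [hKl, hK]
    by_cases hy : 0 < y
    · rw [Set.indicator_of_mem (Set.mem_Ioi.mpr hy), if_pos (mul_pos hlam hy)]
    · rw [Set.indicator_of_notMem (by simpa using hy), if_neg, mul_zero]
      intro h
      exact hy (by nlinarith)
  have hKlm : Measurable (Kl lam) := by
    rw [hKl_ind]; exact hkcont.measurable.indicator measurableSet_Ioi
  have hKnn : ∀ y, 0 ≤ Kl lam y := by
    intro y
    rw [hKl_ind]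
    by_cases hy : y ∈ Set.Ioi (0:ℝ)
    · rw [Set.indicator_of_mem hy]; positivity
    · rw [Set.indicator_of_notMem hy]
  have hKzero : ∀ y : ℝ, y ≤ 0 → Kl lam y = 0 := by
    intro y hy
    rw [hKl_ind, Set.indicator_of_notMem (by simpa using hy)]
  -- moments
  have hmom : ∀ n : ℕ, Integrable (fun y => Kl lam y * y ^ n)
      ∧ ∫ y, Kl lam y * y ^ n = n.factorial / lam ^ n := by
    intro n
    have hfun : (fun y => Kl lam y * y ^ n)
        = Set.indicator (Set.Ioi 0) (fun y => lam * (y ^ n * Real.exp (-(lam * y)))) := by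
      funext y
      rw [hKl_ind]
      by_cases hy : y ∈ Set.Ioi (0:ℝ)
      · rw [Set.indicator_of_mem hy, Set.indicator_of_mem hy]; ring
      · rw [Set.indicator_of_notMem hy, Set.indicator_of_notMem hy, zero_mul]
    constructor
    · rw [hfun, integrable_indicator_iff measurableSet_Ioi]
      exact ((kernel_moment_int hlam n).const_mul lam)
    · rw [hfun, integral_indicator measurableSet_Ioi, integral_const_mul,
        kernel_moment_val hlam n, pow_succ]
      field_simp
  have hkint : Integrable (Kl lam) := by
    have := (hmom 0).1; simpa using this
  have hkval : ∫ y, Kl lam y = 1 := by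
    have := (hmom 0).2; simpa using this
  have hky : Integrable (fun y => Kl lam y * y) := by
    have := (hmom 1).1; simpa using this
  have hkyval : ∫ y, Kl lam y * y = 1 / lam := by
    have := (hmom 1).2; simpa using this
  have hky2 : Integrable (fun y => Kl lam y * y ^ 2) := (hmom 2).1
  have hky2val : ∫ y, Kl lam y * y ^ 2 = 2 / lam ^ 2 := by
    have := (hmom 2).2
    norm_num [Nat.factorial] at this
    convert this using 2
  -- integrability of simple products
  have huρ : Integrable (fun x => u x * ρ x) := by
    have := hu1.bdd_mul (c := Mρ) hρcont.aestronglyMeasurable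
      (Filter.Eventually.of_forall fun x => by simpa [Real.norm_eq_abs] using hMρ x)
    simpa [mul_comm] using this
  have hu'ρ : Integrable (fun x => deriv u x * ρ x) := by
    have := hu'1.bdd_mul (c := Mρ) hρcont.aestronglyMeasurable
      (Filter.Eventually.of_forall fun x => by simpa [Real.norm_eq_abs] using hMρ x)
    simpa [mul_comm] using this
  obtain ⟨Mρ', hMρ'0⟩ := hρ'bdd
  have hMρ' : ∀ y, |deriv ρ y| ≤ Mρ' := fun y => hMρ'0 (Set.mem_range_self y)
  have huρ' : Integrable (fun x => u x * deriv ρ x) := by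
    have := hu1.bdd_mul (c := Mρ') hρ'cont.aestronglyMeasurable
      (Filter.Eventually.of_forall fun x => by simpa [Real.norm_eq_abs] using hMρ' x)
    simpa [mul_comm] using this
  -- integration by parts
  have hIBP : ∫ x, deriv u x * ρ x = - ∫ x, u x * deriv ρ x := by
    have h := integral_mul_deriv_eq_deriv_mul_of_integrable
      (u := u) (v := ρ) (u' := deriv u) (v' := deriv ρ)
      (fun x _ => (hu x).hasDerivAt) (fun x _ => (hρ x).hasDerivAt)
      huρ' hu'ρ huρ
    linarith
  -- product integrabilities for Fubini
  have hF : Integrable (fun p : ℝ × ℝ => Kl lam p.2 * u (p.1 - p.2))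
      (volume.prod volume) := by
    have := hkint.convolution_integrand (ContinuousLinearMap.mul ℝ ℝ) hu1
    simpa using this
  have hFρ : Integrable (fun p : ℝ × ℝ => ρ p.1 * (Kl lam p.2 * u (p.1 - p.2)))
      (volume.prod volume) := by
    exact hF.bdd_mul (c := Mρ) ((hρcont.comp continuous_fst).aestronglyMeasurable)
      (Filter.Eventually.of_forall fun p => by simpa [Real.norm_eq_abs] using hMρ p.1)
  have hG : Integrable (fun p : ℝ × ℝ => u p.1 * (Kl lam p.2 * ρ (p.1 + p.2)))
      (volume.prod volume) := by
    have hmeas : AEStronglyMeasurable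
        (fun p : ℝ × ℝ => u p.1 * (Kl lam p.2 * ρ (p.1 + p.2))) (volume.prod volume) := by
      refine ((hucont.measurable.comp measurable_fst).mul
        ((hKlm.comp measurable_snd).mul
          (hρcont.measurable.comp (measurable_fst.add measurable_snd)))).aestronglyMeasurable
    have hdom : Integrable (fun p : ℝ × ℝ => Mρ * (|u p.1| * Kl lam p.2))
        (volume.prod volume) := (hu1.abs.mul_prod hkint).const_mul Mρ
    refine hdom.mono' hmeas (Filter.Eventually.of_forall fun p => ?_)
    have h1 : ‖u p.1 * (Kl lam p.2 * ρ (p.1 + p.2))‖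
        = |u p.1| * (Kl lam p.2 * |ρ (p.1 + p.2)|) := by
      rw [Real.norm_eq_abs, abs_mul, abs_mul, abs_of_nonneg (hKnn p.2)]
    rw [h1]
    have := hMρ (p.1 + p.2)
    have h2 : Kl lam p.2 * |ρ (p.1 + p.2)| ≤ Kl lam p.2 * Mρ :=
      mul_le_mul_of_nonneg_left this (hKnn p.2)
    calc |u p.1| * (Kl lam p.2 * |ρ (p.1 + p.2)|)
        ≤ |u p.1| * (Kl lam p.2 * Mρ) := mul_le_mul_of_nonneg_left h2 (abs_nonneg _)
      _ = Mρ * (|u p.1| * Kl lam p.2) := by ring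
  -- the dual kernel average
  set g : ℝ → ℝ := fun w => ∫ y, Kl lam y * ρ (w + y) with hgdef
  -- Fubini chain
  have hswap1 : ∫ x, (∫ y, Kl lam y * u (x - y)) * ρ x = ∫ w, u w * g w := by
    calc ∫ x, (∫ y, Kl lam y * u (x - y)) * ρ x
        = ∫ x, ∫ y, ρ x * (Kl lam y * u (x - y)) := by
          congr 1; funext x
          rw [integral_const_mul, mul_comm]
      _ = ∫ y, ∫ x, ρ x * (Kl lam y * u (x - y)) :=
          integral_integral_swap (by exact hFρ)
      _ = ∫ y, ∫ w, ρ (w + y) * (Kl lam y * u w) := by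
          congr 1; funext y
          have := integral_add_right_eq_self (μ := volume)
            (fun x => ρ x * (Kl lam y * u (x - y))) y
          simp only [add_sub_cancel_right] at this
          exact this.symm
      _ = ∫ y, ∫ w, u w * (Kl lam y * ρ (w + y)) := by
          congr 1; funext y; congr 1; funext w; ring
      _ = ∫ w, ∫ y, u w * (Kl lam y * ρ (w + y)) :=
          (integral_integral_swap (by exact hG)).symm
      _ = ∫ w, u w * g w := by
          congr 1; funext w
          rw [integral_const_mul]
  -- integrability of u * g
  have hug : Integrable (fun w => u w * g w) := by
    refine hG.integral_prod_left.congr (Filter.Eventually.of_forall fun w => ?_)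
    have h : (∫ y, u w * (Kl lam y * ρ (w + y))) = u w * g w := integral_const_mul _ _
    simpa using h
  have hne : lam ≠ 0 := ne_of_gt hlam
  have habs : ∀ f : ℝ → ℝ, |∫ x, f x| ≤ ∫ x, |f x| := fun f => by
    simpa [Real.norm_eq_abs] using norm_integral_le_integral_norm (μ := volume) f
  -- integrability of kernel times shifted ρ
  have hKρ : ∀ w, Integrable (fun y => Kl lam y * ρ (w + y)) := by
    intro w
    have := hkint.bdd_mul
      ((hρcont.comp (continuous_const.add continuous_id)).aestronglyMeasurable)
      (c := Mρ) (Filter.Eventually.of_forall fun y => by simpa [Real.norm_eq_abs] using hMρ (w + y))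
    simpa [mul_comm] using this
  -- pointwise bound
  have hpt : ∀ w, |lam ^ 2 * (g w - ρ w) - lam * deriv ρ w| ≤ C := by
    intro w
    have hI1 : Integrable (fun y => Kl lam y * ρ (w + y) - Kl lam y * ρ w) :=
      (hKρ w).sub (hkint.mul_const (ρ w))
    have hI2 : Integrable (fun y => Kl lam y * y * deriv ρ w) := hky.mul_const _
    have hIρw : Integrable (fun y => Kl lam y * ρ w) := hkint.mul_const _
    have hint3 : Integrable (fun y => Kl lam y * (ρ (w + y) - ρ w - deriv ρ w * y)) := by
      have h0 : Integrable
          (fun y => Kl lam y * ρ (w + y) - Kl lam y * ρ w - Kl lam y * y * deriv ρ w) :=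
        hI1.sub hI2
      refine h0.congr (Filter.Eventually.of_forall fun y => ?_)
      ring
    have e1 : ∫ y, Kl lam y * (ρ (w + y) - ρ w - deriv ρ w * y)
        = g w - ρ w - deriv ρ w * (1 / lam) := by
      have expand : (fun y => Kl lam y * (ρ (w + y) - ρ w - deriv ρ w * y))
          = fun y => (Kl lam y * ρ (w + y) - Kl lam y * ρ w) - Kl lam y * y * deriv ρ w := by
        funext y; ring
      rw [expand, integral_sub hI1 hI2,
        integral_sub (hKρ w) hIρw, integral_mul_const, integral_mul_const,
        hkval, hkyval]
      ring
    have e2 : |∫ y, Kl lam y * (ρ (w + y) - ρ w - deriv ρ w * y)| ≤ C / lam ^ 2 := by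
      have hdom : Integrable (fun y => Kl lam y * (C / 2 * y ^ 2)) := by
        refine (hky2.const_mul (C / 2)).congr (Filter.Eventually.of_forall fun y => ?_)
        ring
      calc |∫ y, Kl lam y * (ρ (w + y) - ρ w - deriv ρ w * y)|
          ≤ ∫ y, |Kl lam y * (ρ (w + y) - ρ w - deriv ρ w * y)| := habs _
        _ ≤ ∫ y, Kl lam y * (C / 2 * y ^ 2) := by
            refine integral_mono hint3.abs hdom fun y => ?_
            rcases le_or_gt y 0 with hy | hy
            · rw [hKzero y hy]; simp
            · rw [abs_mul, abs_of_nonneg (hKnn y)]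
              exact mul_le_mul_of_nonneg_left
                (taylor_bound' hρ hρ' hCle w y hy.le) (hKnn y)
        _ = C / 2 * ∫ y, Kl lam y * y ^ 2 := by
            rw [← integral_const_mul]; congr 1; funext y; ring
        _ = C / lam ^ 2 := by rw [hky2val]; field_simp
    have e3 : lam ^ 2 * (g w - ρ w) - lam * deriv ρ w
        = lam ^ 2 * (g w - ρ w - deriv ρ w * (1 / lam)) := by
      field_simp
    rw [e3, ← e1, abs_mul, abs_of_nonneg (by positivity : (0:ℝ) ≤ lam ^ 2)]
    calc lam ^ 2 * |∫ y, Kl lam y * (ρ (w + y) - ρ w - deriv ρ w * y)|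
        ≤ lam ^ 2 * (C / lam ^ 2) := mul_le_mul_of_nonneg_left e2 (by positivity)
      _ = C := by field_simp
  -- combine everything
  set h : ℝ → ℝ := fun w => lam ^ 2 * (g w - ρ w) - lam * deriv ρ w with hhdef
  have hI5 : Integrable (fun w => lam ^ 2 * (u w * g w)) := hug.const_mul _
  have hI6 : Integrable (fun w => lam ^ 2 * (u w * ρ w)) := huρ.const_mul _
  have hI8 : Integrable (fun w => lam * (u w * deriv ρ w)) := huρ'.const_mul _
  have hI7 : Integrable
      (fun w => lam ^ 2 * (u w * g w) - lam ^ 2 * (u w * ρ w)) := hI5.sub hI6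
  have huh : Integrable (fun w => u w * h w) := by
    have h0 : Integrable (fun w => lam ^ 2 * (u w * g w) - lam ^ 2 * (u w * ρ w)
        - lam * (u w * deriv ρ w)) := hI7.sub hI8
    refine h0.congr (Filter.Eventually.of_forall fun w => ?_)
    simp only [hhdef]
    ring
  have hconvρ : Integrable (fun x => (∫ y, Kl lam y * u (x - y)) * ρ x) := by
    refine hFρ.integral_prod_left.congr (Filter.Eventually.of_forall fun x => ?_)
    have h1 : (∫ y, ρ x * (Kl lam y * u (x - y)))
        = ρ x * ∫ y, Kl lam y * u (x - y) := integral_const_mul _ _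
    simpa [mul_comm] using h1
  have hLHS : ∫ x, (lam ^ 2 * ((∫ y, Kl lam y * u (x - y)) - u x) + lam * deriv u x) * ρ x
      = ∫ w, u w * h w := by
    have expand : (fun x =>
        (lam ^ 2 * ((∫ y, Kl lam y * u (x - y)) - u x) + lam * deriv u x) * ρ x)
        = fun x => lam ^ 2 * ((∫ y, Kl lam y * u (x - y)) * ρ x) - lam ^ 2 * (u x * ρ x)
            + lam * (deriv u x * ρ x) := by
      funext x; ring
    have hI9 : Integrable (fun x => lam ^ 2 * ((∫ y, Kl lam y * u (x - y)) * ρ x)) :=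
      hconvρ.const_mul _
    have hI10 : Integrable
        (fun x => lam ^ 2 * ((∫ y, Kl lam y * u (x - y)) * ρ x) - lam ^ 2 * (u x * ρ x)) :=
      hI9.sub hI6
    have hI11 : Integrable (fun x => lam * (deriv u x * ρ x)) := hu'ρ.const_mul _
    rw [expand,
      integral_add hI10 hI11,
      integral_sub hI9 hI6,
      integral_const_mul, integral_const_mul, integral_const_mul, hswap1, hIBP]
    have expand2 : (fun w => u w * h w)
        = fun w => lam ^ 2 * (u w * g w) - lam ^ 2 * (u w * ρ w)
            - lam * (u w * deriv ρ w) := by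
      funext w; simp only [hhdef]; ring
    rw [expand2,
      integral_sub hI7 hI8,
      integral_sub hI5 hI6,
      integral_const_mul, integral_const_mul, integral_const_mul]
    ring
  rw [hLHS]
  calc |∫ w, u w * h w| ≤ ∫ w, |u w * h w| := habs _
    _ ≤ ∫ w, |u w| * C := by
        refine integral_mono huh.abs (hu1.abs.mul_const C) fun w => ?_
        rw [abs_mul]
        exact mul_le_mul_of_nonneg_left (hpt w) (abs_nonneg _)
    _ = (∫ x, |u x|) * C := integral_mul_const C _
end
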